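/- arXiv:2512.24587 — 6 statements merged into one kernel-verified Lean document; each statement's English description precedes it below -/
import Mathlib

section
/- (Improved near-optimality for discrete scores.) Under the stated conditions (i.i.d. datapoints, feasibility, bounded constraint and objective costs, every score with finite support, non-degenerate risk levels for all indices, and λ_j^{*,(2)} ∈ (λ_j^min, λ_j^max) for all j), there exist a constant C > 0 and an integer N such that for all n ≥ N and any minimizer λ*_{1:m} of the population problem, the MULTIRISK thresholds λ̂_1^{(2)}(n),…,λ̂_m^{(2)}(n) computed from the first n datapoints satisfy E[V_{m+1}·1{S_1 ≤ λ̂_1^{(2)}(n),…,S_m ≤ λ̂_m^{(2)}(n)}] ≤ E[V_{m+1}·1{S_1 ≤ λ*_1,…,S_m ≤ λ*_m}] + C·exp(−n^{0.99}), where (S_1,…,S_m,V_{m+1}) denotes a fresh test datapoint independent of the first n datapoints. -/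
open MeasureTheory Set

attribute [local instance] Classical.propDecidable

noncomputable section

/-- The loss `L_j^{(i)}(λ_{1:j}) = V_j^{(i)} · 1{S_1^{(i)} ≤ λ_1, …, S_{j−1}^{(i)} ≤ λ_{j−1},
S_j^{(i)} > λ_j}` for an infinite i.i.d. sequence of datapoints indexed by `i : ℕ` (so the paper's
datapoint `i` is index `i − 1` here).  Only the coordinates `ℓ ≤ j` of `lam` are read. -/
def lossSeq {Ω : Type*} {m : ℕ} (S V : ℕ → Fin m → Ω → ℝ)
    (j : Fin m) (i : ℕ) (lam : Fin m → ℝ) (ω : Ω) : ℝ :=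
  V i j ω * (if (∀ l, l < j → S i l ω ≤ lam l) ∧ lam j < S i j ω then 1 else 0)

/-- The population risk `g_j^*(λ_j; λ_{1:(j−1)}) = E[L_j^{(1)}(λ_{1:j})]`. -/
def gStarSeq {Ω : Type*} [MeasurableSpace Ω] {m : ℕ} (μ : Measure Ω)
    (S V : ℕ → Fin m → Ω → ℝ) (j : Fin m) (lam : Fin m → ℝ) : ℝ :=
  ∫ ω, lossSeq S V j 0 lam ω ∂μ

/-- `U_j^*(λ_{1:(j−1)}; b) = sup{x ∈ Λ_j : g_j^*(x; λ_{1:(j−1)}) > b}`, the supremum of the empty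
set being `λ_j^min`. -/
def UStarSeq {Ω : Type*} [MeasurableSpace Ω] {m : ℕ} (μ : Measure Ω)
    (S V : ℕ → Fin m → Ω → ℝ) (lamMin lamMax : Fin m → ℝ)
    (j : Fin m) (lam : Fin m → ℝ) (b : ℝ) : ℝ :=
  sSup (insert (lamMin j)
    {x | x ∈ Icc (lamMin j) (lamMax j) ∧ b < gStarSeq μ S V j (Function.update lam j x)})

/-- The recursively defined population thresholds `λ_1^{*,(2)} = U_1^*(β_1)`,
`λ_j^{*,(2)} = U_j^*(λ_1^{*,(2)},…,λ_{j−1}^{*,(2)}; β_j)`. -/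
def lamStarSeq {Ω : Type*} [MeasurableSpace Ω] {m : ℕ} (μ : Measure Ω)
    (S V : ℕ → Fin m → Ω → ℝ) (lamMin lamMax β : Fin m → ℝ) (j : Fin m) : ℝ :=
  UStarSeq μ S V lamMin lamMax j
    (fun ℓ => if hl : ℓ < j then lamStarSeq μ S V lamMin lamMax β ℓ else 0) (β j)
termination_by j.val
decreasing_by exact hl

/-- The bumped empirical risk `g_j^+` computed from the first `n` datapoints:
`g_j^+(λ_j; λ_{1:(j−1)}) = (1/(n+1)) Σ_{i<n} L_j^{(i)}(λ_{1:j}) + Vmax_j/(n+1)`. -/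
def gPlusSeq {Ω : Type*} {m : ℕ} (n : ℕ) (S V : ℕ → Fin m → Ω → ℝ) (Vmax : Fin m → ℝ)
    (j : Fin m) (lam : Fin m → ℝ) (ω : Ω) : ℝ :=
  (1 / ((n : ℝ) + 1)) * ∑ i ∈ Finset.range n, lossSeq S V j i lam ω + Vmax j / ((n : ℝ) + 1)

/-- `U_j^+(λ_{1:(j−1)}; b) = inf{x ∈ Λ_j : g_j^+(x; λ_{1:(j−1)}) ≤ b}`, the infimum of the empty
set being `λ_j^max`. -/
def UPlusSeq {Ω : Type*} {m : ℕ} (n : ℕ) (S V : ℕ → Fin m → Ω → ℝ) (Vmax : Fin m → ℝ)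
    (lamMin lamMax : Fin m → ℝ) (j : Fin m) (lam : Fin m → ℝ) (b : ℝ) (ω : Ω) : ℝ :=
  sInf (insert (lamMax j)
    {x | x ∈ Icc (lamMin j) (lamMax j) ∧ gPlusSeq n S V Vmax j (Function.update lam j x) ω ≤ b})

/-- The even-indexed MULTIRISK thresholds computed from the first `n` datapoints:
`lamHatSeq n … j k = λ̂_j^{(2k)}(n) = U_j^+(λ̂_1^{(2k+2)}(n),…,λ̂_{j−1}^{(2k+2)}(n); β_j^{(k−1)})`
where `β_j^{(k)} = β_j − k·δ_j` and `δ_j = (Vmax_j − Vmin_j)/(n+1)`.  In particular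
`lamHatSeq n … j 1` is the MULTIRISK threshold `λ̂_j^{(2)}(n)`. -/
def lamHatSeq {Ω : Type*} {m : ℕ} (n : ℕ) (S V : ℕ → Fin m → Ω → ℝ)
    (lamMin lamMax Vmin Vmax β : Fin m → ℝ) (j : Fin m) (k : ℕ) (ω : Ω) : ℝ :=
  UPlusSeq n S V Vmax lamMin lamMax j
    (fun ℓ => if hl : ℓ < j then lamHatSeq n S V lamMin lamMax Vmin Vmax β ℓ (k + 1) ω else 0)
    (β j - ((k : ℝ) - 1) * ((Vmax j - Vmin j) / ((n : ℝ) + 1))) ω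
termination_by j.val
decreasing_by exact hl


section MultiriskAuxSection

open ProbabilityTheory Real




variable {Ω : Type*} {m : ℕ} {S V : ℕ → Fin m → Ω → ℝ}

lemma loss_congr {j : Fin m} {i : ℕ} {lam lam' : Fin m → ℝ}
    (h1 : ∀ l, l < j → lam l = lam' l) (h2 : lam j = lam' j) :
    lossSeq S V j i lam = lossSeq S V j i lam' := by
  funext ω
  unfold lossSeq
  congr 1
  have : ((∀ l, l < j → S i l ω ≤ lam l) ∧ lam j < S i j ω)
      ↔ ((∀ l, l < j → S i l ω ≤ lam' l) ∧ lam' j < S i j ω) := by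
    rw [h2]
    constructor
    · rintro ⟨ha, hb⟩; exact ⟨fun l hl => (h1 l hl) ▸ ha l hl, hb⟩
    · rintro ⟨ha, hb⟩; exact ⟨fun l hl => (h1 l hl) ▸ ha l hl, hb⟩
  simp only [this]

lemma loss_mono {j : Fin m} {i : ℕ} {lam lam' : Fin m → ℝ} {ω : Ω}
    (hV : 0 ≤ V i j ω) (h1 : ∀ l, l < j → lam l ≤ lam' l) (h2 : lam' j ≤ lam j) :
    lossSeq S V j i lam ω ≤ lossSeq S V j i lam' ω := by
  unfold lossSeq
  apply mul_le_mul_of_nonneg_left _ hV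
  by_cases h : (∀ l, l < j → S i l ω ≤ lam l) ∧ lam j < S i j ω
  · rw [if_pos h, if_pos ⟨fun l hl => (h.1 l hl).trans (h1 l hl), lt_of_le_of_lt h2 h.2⟩]
  · rw [if_neg h]; positivity

lemma loss_nonneg {j : Fin m} {i : ℕ} {lam : Fin m → ℝ} {ω : Ω}
    (hV : 0 ≤ V i j ω) : 0 ≤ lossSeq S V j i lam ω := by
  unfold lossSeq; positivity

lemma loss_le {j : Fin m} {i : ℕ} {lam : Fin m → ℝ} {ω : Ω} {b : ℝ}
    (hV : 0 ≤ V i j ω) (hVb : V i j ω ≤ b) : lossSeq S V j i lam ω ≤ b := by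
  unfold lossSeq
  rcases le_or_gt (V i j ω * (if (∀ l, l < j → S i l ω ≤ lam l) ∧ lam j < S i j ω then 1 else 0)) b with h | h
  · exact h
  · split_ifs with hc
    · simpa using hVb
    · simpa using hV.trans hVb

variable [MeasurableSpace Ω]

lemma measurable_loss (hS : ∀ i j, Measurable (S i j)) (hV : ∀ i j, Measurable (V i j))
    (j : Fin m) (i : ℕ) (lam : Fin m → ℝ) :
    Measurable (fun ω => lossSeq S V j i lam ω) := by
  unfold lossSeq
  apply (hV i j).mul
  apply Measurable.ite _ measurable_const measurable_const
  apply MeasurableSet.inter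
  · have heq : (fun ω => ∀ l, l < j → S i l ω ≤ lam l) = fun ω => ω ∈ ⋂ l, {ω | l < j → S i l ω ≤ lam l} := by
      ext ω; simp
    show MeasurableSet (fun ω => ∀ l, l < j → S i l ω ≤ lam l)
    rw [heq]
    refine MeasurableSet.iInter fun l => ?_
    by_cases hl : l < j
    · simp only [hl, forall_true_left]
      exact measurableSet_le (hS i l) measurable_const
    · simp only [hl, false_implies, setOf_true]
      exact MeasurableSet.univ
  · exact measurableSet_lt measurable_const (hS i j)

lemma integrable_loss (μ : Measure Ω) [IsProbabilityMeasure μ]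
    (hS : ∀ i j, Measurable (S i j)) (hV : ∀ i j, Measurable (V i j))
    (j : Fin m) (i : ℕ) (lam : Fin m → ℝ) {b : ℝ}
    (hbd : ∀ᵐ ω ∂μ, V i j ω ∈ Icc 0 b) :
    Integrable (fun ω => lossSeq S V j i lam ω) μ := by
  refine ⟨(measurable_loss hS hV j i lam).aestronglyMeasurable,
    HasFiniteIntegral.of_bounded (C := b) ?_⟩
  filter_upwards [hbd] with ω hω
  rw [Real.norm_eq_abs, abs_of_nonneg (loss_nonneg hω.1)]
  exact loss_le hω.1 hω.2

lemma gStar_mono (μ : Measure Ω) [IsProbabilityMeasure μ]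
    (hS : ∀ i j, Measurable (S i j)) (hV : ∀ i j, Measurable (V i j))
    {b : ℝ} {j : Fin m} (hbd : ∀ᵐ ω ∂μ, V 0 j ω ∈ Icc 0 b)
    {lam lam' : Fin m → ℝ} (h1 : ∀ l, l < j → lam l ≤ lam' l) (h2 : lam' j ≤ lam j) :
    gStarSeq μ S V j lam ≤ gStarSeq μ S V j lam' := by
  refine integral_mono_ae (integrable_loss μ hS hV j 0 lam hbd)
    (integrable_loss μ hS hV j 0 lam' hbd) ?_
  filter_upwards [hbd] with ω hω
  exact loss_mono hω.1 h1 h2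

lemma gStar_nonneg (μ : Measure Ω) [IsProbabilityMeasure μ]
    {b : ℝ} {j : Fin m} (hbd : ∀ᵐ ω ∂μ, V 0 j ω ∈ Icc 0 b)
    (lam : Fin m → ℝ) : 0 ≤ gStarSeq μ S V j lam := by
  refine integral_nonneg_of_ae ?_
  filter_upwards [hbd] with ω hω
  exact loss_nonneg hω.1

/-- Step A: the recursive population thresholds are coordinatewise below any feasible point. -/
lemma lamStar_le_feasible (μ : Measure Ω) [IsProbabilityMeasure μ]
    (hS : ∀ i j, Measurable (S i j)) (hV : ∀ i j, Measurable (V i j))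
    (lamMin lamMax β : Fin m → ℝ) (Vmax : Fin m → ℝ)
    (hbd : ∀ j : Fin m, ∀ᵐ ω ∂μ, V 0 j ω ∈ Icc 0 (Vmax j))
    (lamst : Fin m → ℝ) (hmem : ∀ j, lamst j ∈ Icc (lamMin j) (lamMax j))
    (hfeas : ∀ j, gStarSeq μ S V j lamst ≤ β j) :
    ∀ p : ℕ, ∀ j : Fin m, j.val < p → lamStarSeq μ S V lamMin lamMax β j ≤ lamst j := by
  intro p
  induction p with
  | zero => intro j hj; omega
  | succ p ih =>
    intro j hj
    by_contra hlt
    push_neg at hlt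
    rw [lamStarSeq] at hlt
    unfold UStarSeq at hlt
    set dF : Fin m → ℝ := fun ℓ =>
      if hl : ℓ < j then lamStarSeq μ S V lamMin lamMax β ℓ else 0 with hdF
    obtain ⟨y, hy, hlty⟩ := exists_lt_of_lt_csSup (insert_nonempty _ _) hlt
    rcases hy with rfl | ⟨hyIcc, hygt⟩
    · exact absurd (hmem j).1 (not_le.2 hlty)
    · have hmono : gStarSeq μ S V j (Function.update dF j y) ≤ gStarSeq μ S V j lamst := by
        refine gStar_mono μ hS hV (hbd j) ?_ ?_
        · intro l hl
          rw [Function.update_of_ne (Fin.ne_of_lt hl), hdF]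
          simp only [dif_pos hl]
          exact ih l (by omega)
        · rw [Function.update_self]
          exact hlty.le
      have := hfeas j
      linarith

/-- Step B: strict gap `g_j^*(λ^*) < β j` for discrete scores. -/
lemma gStar_lamStar_lt (μ : Measure Ω) [IsProbabilityMeasure μ]
    (hS : ∀ i j, Measurable (S i j)) (hV : ∀ i j, Measurable (V i j))
    (lamMin lamMax β Vmax : Fin m → ℝ)
    (hΛ : ∀ j, lamMin j ≤ lamMax j)
    (hbd : ∀ j : Fin m, ∀ᵐ ω ∂μ, V 0 j ω ∈ Icc 0 (Vmax j))
    (hdisc : ∀ j : Fin m, ∃ 𝒮 : Finset ℝ, ∀ᵐ ω ∂μ, S 0 j ω ∈ (𝒮 : Set ℝ))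
    (hnondeg : ∀ j : Fin m, β j ∉ Set.range (fun x : ℝ => gStarSeq μ S V j
        (Function.update (fun ℓ => lamStarSeq μ S V lamMin lamMax β ℓ) j x)))
    (hstar : ∀ j : Fin m, lamStarSeq μ S V lamMin lamMax β j ∈ Ioo (lamMin j) (lamMax j)) :
    ∀ j : Fin m, gStarSeq μ S V j (fun ℓ => lamStarSeq μ S V lamMin lamMax β ℓ) < β j := by
  intro j
  set lamF : Fin m → ℝ := fun ℓ => lamStarSeq μ S V lamMin lamMax β ℓ with hlamF
  obtain ⟨𝒮, h𝒮⟩ := hdisc j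
  obtain ⟨x, hx1, hx2, hxatom⟩ : ∃ x, lamF j < x ∧ x ≤ lamMax j ∧
      ∀ s ∈ 𝒮, ¬(lamF j < s ∧ s ≤ x) := by
    by_cases hne : (𝒮.filter (fun s => lamF j < s)).Nonempty
    · have hs0mem := Finset.min'_mem _ hne
      rw [Finset.mem_filter] at hs0mem
      set s0 := (𝒮.filter (fun s => lamF j < s)).min' hne with hs0
      refine ⟨min ((lamF j + s0)/2) (lamMax j), lt_min (by linarith [hs0mem.2]) (hstar j).2,
        min_le_right _ _, ?_⟩
      rintro s hs ⟨hgt, hle⟩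
      have h1 : s0 ≤ s := Finset.min'_le _ _ (Finset.mem_filter.2 ⟨hs, hgt⟩)
      have h2 : min ((lamF j + s0)/2) (lamMax j) ≤ (lamF j + s0)/2 := min_le_left _ _
      linarith [hs0mem.2]
    · refine ⟨lamMax j, (hstar j).2, le_refl _, ?_⟩
      rintro s hs ⟨hgt, hle⟩
      exact hne ⟨s, Finset.mem_filter.2 ⟨hs, hgt⟩⟩
  have heq : gStarSeq μ S V j (Function.update lamF j x) = gStarSeq μ S V j lamF := by
    refine integral_congr_ae ?_
    filter_upwards [h𝒮] with ω hω
    unfold lossSeq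
    congr 1
    have hiff : ((∀ l, l < j → S 0 l ω ≤ Function.update lamF j x l)
          ∧ Function.update lamF j x j < S 0 j ω)
        ↔ ((∀ l, l < j → S 0 l ω ≤ lamF l) ∧ lamF j < S 0 j ω) := by
      rw [Function.update_self]
      constructor
      · rintro ⟨ha, hb⟩
        refine ⟨fun l hl => ?_, lt_trans hx1 hb⟩
        have := ha l hl
        rwa [Function.update_of_ne (Fin.ne_of_lt hl)] at this
      · rintro ⟨ha, hb⟩
        refine ⟨fun l hl => ?_, ?_⟩
        · rw [Function.update_of_ne (Fin.ne_of_lt hl)]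
          exact ha l hl
        · by_contra hxx
          push_neg at hxx
          exact hxatom _ hω ⟨hb, hxx⟩
    simp only [hiff]
  have hcongr : gStarSeq μ S V j (Function.update
        (fun ℓ => if hl : ℓ < j then lamStarSeq μ S V lamMin lamMax β ℓ else 0) j x)
      = gStarSeq μ S V j (Function.update lamF j x) := by
    unfold gStarSeq
    rw [loss_congr (lam := Function.update
        (fun ℓ => if hl : ℓ < j then lamStarSeq μ S V lamMin lamMax β ℓ else 0) j x)
        (lam' := Function.update lamF j x) ?_ ?_]
    · intro l hl
      rw [Function.update_of_ne (Fin.ne_of_lt hl), Function.update_of_ne (Fin.ne_of_lt hl)]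
      simp only [dif_pos hl, hlamF]
    · rw [Function.update_self, Function.update_self]
  have hsup : lamStarSeq μ S V lamMin lamMax β j = sSup (insert (lamMin j)
      {z | z ∈ Icc (lamMin j) (lamMax j) ∧ β j < gStarSeq μ S V j (Function.update
        (fun ℓ => if hl : ℓ < j then lamStarSeq μ S V lamMin lamMax β ℓ else 0) j z)}) := by
    rw [lamStarSeq]
    rfl
  have hle : gStarSeq μ S V j (Function.update lamF j x) ≤ β j := by
    rw [← hcongr]
    by_contra hgt
    push_neg at hgt
    have hmem' : x ∈ insert (lamMin j)
        {z | z ∈ Icc (lamMin j) (lamMax j) ∧ β j < gStarSeq μ S V j (Function.update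
          (fun ℓ => if hl : ℓ < j then lamStarSeq μ S V lamMin lamMax β ℓ else 0) j z)} :=
      mem_insert_of_mem _ ⟨⟨((hstar j).1.trans hx1).le, hx2⟩, hgt⟩
    have hbdd : x ≤ sSup (insert (lamMin j)
        {z | z ∈ Icc (lamMin j) (lamMax j) ∧ β j < gStarSeq μ S V j (Function.update
          (fun ℓ => if hl : ℓ < j then lamStarSeq μ S V lamMin lamMax β ℓ else 0) j z)}) := by
      refine le_csSup ⟨lamMax j, ?_⟩ hmem'
      rintro y (rfl | hy)
      exacts [hΛ j, hy.1.2]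
    rw [← hsup] at hbdd
    exact absurd hbdd (not_le.2 hx1)
  have hne : gStarSeq μ S V j lamF ≠ β j := by
    intro habs
    refine hnondeg j ⟨lamF j, ?_⟩
    show gStarSeq μ S V j (Function.update lamF j (lamF j)) = β j
    rw [Function.update_eq_self]
    exact habs
  rw [heq] at hle
  exact lt_of_le_of_ne hle hne


/-- pointwise convexity bound: for `x ∈ [0,B]`, `exp (t*x) ≤ 1 + (x/B)*(exp (t*B) - 1)`. -/
lemma exp_mul_le_of_mem_Icc {x B t : ℝ} (hB : 0 < B) (hx : x ∈ Icc 0 B) :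
    Real.exp (t * x) ≤ 1 + (x / B) * (Real.exp (t * B) - 1) := by
  obtain ⟨hx0, hxB⟩ := hx
  have hs0 : 0 ≤ x / B := div_nonneg hx0 hB.le
  have hs1 : x / B ≤ 1 := (div_le_one hB).2 hxB
  have h := convexOn_exp.2 (mem_univ (0 : ℝ)) (mem_univ (t * B))
    (by linarith : (0:ℝ) ≤ 1 - x / B) hs0 (by ring)
  simp only [smul_eq_mul, mul_zero, zero_add, Real.exp_zero, mul_one] at h
  have hx' : x / B * (t * B) = t * x := by field_simp
  rw [hx'] at h
  linarith

/-- Abstract Chernoff bound for i.i.d.-type bounded nonnegative variables. -/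
lemma chernoff_aux {Ω : Type*} [MeasurableSpace Ω] (μ : Measure Ω) [IsProbabilityMeasure μ]
    (X : ℕ → Ω → ℝ) (hX : ∀ i, Measurable (X i))
    (hind : iIndepFun X μ)
    (B : ℝ) (hB : 0 < B) (hbd : ∀ i, ∀ᵐ ω ∂μ, X i ω ∈ Icc 0 B)
    (hmgf : ∀ i t, mgf (X i) μ t = mgf (X 0) μ t)
    (μ0 η : ℝ) (hμ0 : ∫ ω, X 0 ω ∂μ = μ0) (hη : 0 < η) :
    ∃ c : ℝ, 0 < c ∧ ∀ n : ℕ,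
      (μ {ω | (n : ℝ) * (μ0 + η) ≤ ∑ i ∈ Finset.range n, X i ω}).toReal
        ≤ Real.exp (-(c * n)) := by
  have hμ00 : 0 ≤ μ0 := by
    rw [← hμ0]
    refine integral_nonneg_of_ae ?_
    filter_upwards [hbd 0] with ω hω using hω.1
  set t : ℝ := min (η / (2 * (μ0 * B + 1))) (1 / B) with ht_def
  have hden : 0 < μ0 * B + 1 := by positivity
  have ht : 0 < t := lt_min (by positivity) (by positivity)
  have htB : t * B ≤ 1 := by
    have : t ≤ 1 / B := min_le_right _ _
    calc t * B ≤ (1 / B) * B := by gcongr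
    _ = 1 := by field_simp
  have htB0 : 0 ≤ t * B := by positivity
  -- integrability of exp (t' * X i) for any 0 ≤ t'
  have hint : ∀ i, Integrable (fun ω => Real.exp (t * X i ω)) μ := by
    intro i
    refine ⟨(((hX i).const_mul t).exp).aestronglyMeasurable,
      HasFiniteIntegral.of_bounded (C := Real.exp (t * B)) ?_⟩
    filter_upwards [hbd i] with ω hω
    rw [Real.norm_eq_abs, abs_of_pos (Real.exp_pos _)]
    exact Real.exp_le_exp.2 (by nlinarith [hω.1, hω.2, ht.le])
  have hXint : Integrable (X 0) μ := by
    refine ⟨(hX 0).aestronglyMeasurable, HasFiniteIntegral.of_bounded (C := B) ?_⟩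
    filter_upwards [hbd 0] with ω hω
    rw [Real.norm_eq_abs, abs_of_nonneg hω.1]; exact hω.2
  -- bound on the single-variable mgf
  have hmgf0 : mgf (X 0) μ t ≤ Real.exp (μ0 * t + μ0 * B * t ^ 2) := by
    have step1 : mgf (X 0) μ t ≤ 1 + (μ0 / B) * (Real.exp (t * B) - 1) := by
      have : mgf (X 0) μ t ≤ ∫ ω, (1 + (X 0 ω / B) * (Real.exp (t * B) - 1)) ∂μ := by
        refine integral_mono_ae (hint 0) ?_ ?_
        · exact (integrable_const 1).add ((hXint.div_const B).mul_const _)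
        · filter_upwards [hbd 0] with ω hω using exp_mul_le_of_mem_Icc hB hω
      calc mgf (X 0) μ t ≤ _ := this
      _ = 1 + (μ0 / B) * (Real.exp (t * B) - 1) := by
        rw [integral_add (integrable_const 1) ((hXint.div_const B).mul_const _)]
        simp only [integral_const, probReal_univ, ENNReal.toReal_one, one_smul,
          integral_mul_const, integral_div, hμ0]
    have step2 : Real.exp (t * B) - 1 ≤ t * B + (t * B) ^ 2 := by
      have hb := Real.exp_bound (x := t * B) (by rw [abs_of_nonneg htB0]; exact htB) (n := 2) (by norm_num)
      have hsum : ∑ m ∈ Finset.range 2, (t * B) ^ m / (m.factorial : ℝ) = 1 + t * B := by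
        simp [Finset.sum_range_succ]
      rw [hsum, abs_of_nonneg htB0] at hb
      norm_num [Nat.factorial] at hb
      have := abs_le.1 hb
      nlinarith [this.2, sq_nonneg (t * B)]
    have hμ0B : 0 ≤ μ0 / B := div_nonneg hμ00 hB.le
    have step3 : (μ0 / B) * (Real.exp (t * B) - 1) ≤ μ0 * t + μ0 * B * t ^ 2 := by
      calc (μ0 / B) * (Real.exp (t * B) - 1) ≤ (μ0 / B) * (t * B + (t * B) ^ 2) := by gcongr
      _ = μ0 * t + μ0 * B * t ^ 2 := by field_simp
    calc mgf (X 0) μ t ≤ 1 + (μ0 / B) * (Real.exp (t * B) - 1) := step1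
    _ ≤ 1 + (μ0 * t + μ0 * B * t ^ 2) := by linarith
    _ ≤ Real.exp (μ0 * t + μ0 * B * t ^ 2) := by
        have := Real.add_one_le_exp (μ0 * t + μ0 * B * t ^ 2); linarith
  refine ⟨t * η / 2, by positivity, fun n => ?_⟩
  -- integrability of exp (t * Σ)
  have hintsum : Integrable (fun ω => Real.exp (t * (∑ i ∈ Finset.range n, X i ω))) μ := by
    refine ⟨(((Finset.measurable_sum _ (fun i _ => hX i)).const_mul t).exp).aestronglyMeasurable,
      HasFiniteIntegral.of_bounded (C := Real.exp (t * (n * B))) ?_⟩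
    have hae : ∀ᵐ ω ∂μ, ∀ i ∈ Finset.range n, X i ω ∈ Icc 0 B :=
      (ae_ball_iff (Finset.range n).countable_toSet).2 fun i _ => hbd i
    filter_upwards [hae] with ω hω
    rw [Real.norm_eq_abs, abs_of_pos (Real.exp_pos _)]
    refine Real.exp_le_exp.2 (mul_le_mul_of_nonneg_left ?_ ht.le)
    calc ∑ i ∈ Finset.range n, X i ω ≤ ∑ i ∈ Finset.range n, B :=
      Finset.sum_le_sum fun i hi => (hω i hi).2
    _ = n * B := by simp [mul_comm]
  have hch := measure_ge_le_exp_mul_mgf (μ := μ) (X := fun ω => ∑ i ∈ Finset.range n, X i ω)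
    ((n : ℝ) * (μ0 + η)) ht.le hintsum
  have hmgfsum : mgf (fun ω => ∑ i ∈ Finset.range n, X i ω) μ t = (mgf (X 0) μ t) ^ n := by
    have h1 : (fun ω => ∑ i ∈ Finset.range n, X i ω) = ∑ i ∈ Finset.range n, X i := by
      funext ω; simp
    rw [h1, hind.mgf_sum hX (Finset.range n)]
    rw [Finset.prod_congr rfl (fun i _ => hmgf i t), Finset.prod_const, Finset.card_range]
  calc (μ {ω | (n : ℝ) * (μ0 + η) ≤ ∑ i ∈ Finset.range n, X i ω}).toReal
      ≤ Real.exp (-t * ((n : ℝ) * (μ0 + η))) * mgf (fun ω => ∑ i ∈ Finset.range n, X i ω) μ t := hch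
    _ ≤ Real.exp (-t * ((n : ℝ) * (μ0 + η))) * Real.exp (μ0 * t + μ0 * B * t ^ 2) ^ n := by
        rw [hmgfsum]
        refine mul_le_mul_of_nonneg_left (pow_le_pow_left₀ (mgf_nonneg) hmgf0 n) (Real.exp_pos _).le
    _ = Real.exp (-t * ((n : ℝ) * (μ0 + η)) + n * (μ0 * t + μ0 * B * t ^ 2)) := by
        rw [← Real.exp_nat_mul, ← Real.exp_add]
    _ ≤ Real.exp (-(t * η / 2 * n)) := by
        refine Real.exp_le_exp.2 ?_
        have htsmall : μ0 * B * t ≤ η / 2 := by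
          have h1 : t ≤ η / (2 * (μ0 * B + 1)) := min_le_left _ _
          have h2 : μ0 * B * t ≤ (μ0 * B + 1) * t := by nlinarith [ht.le, hμ00, hB.le]
          calc μ0 * B * t ≤ (μ0 * B + 1) * t := h2
          _ ≤ (μ0 * B + 1) * (η / (2 * (μ0 * B + 1))) := by gcongr
          _ = η / 2 := by field_simp
        have hn0 : (0:ℝ) ≤ n := Nat.cast_nonneg n
        have : μ0 * B * t ^ 2 ≤ (η / 2) * t := by nlinarith [ht.le]
        nlinarith [ht.le]

lemma lamHat_le_core {Ω : Type*} {m : ℕ} (n : ℕ) (S V : ℕ → Fin m → Ω → ℝ)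
    (lamMin lamMax Vmin Vmax β : Fin m → ℝ) (lamF : Fin m → ℝ) (ω : Ω)
    (hmem : ∀ j, lamF j ∈ Icc (lamMin j) (lamMax j))
    (hVnn : ∀ i, i < n → ∀ j, 0 ≤ V i j ω)
    (hVmm : ∀ j, 0 ≤ Vmax j - Vmin j)
    (a : Fin m → ℝ) (ha0 : ∀ j, 0 ≤ a j)
    (hemp : ∀ j, ∑ i ∈ Finset.range n, lossSeq S V j i lamF ω ≤ (n : ℝ) * a j)
    (hbudget : ∀ j, a j + Vmax j / ((n : ℝ) + 1)
      + (m : ℝ) * ((Vmax j - Vmin j) / ((n : ℝ) + 1)) ≤ β j) :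
    ∀ p : ℕ, ∀ j : Fin m, j.val < p → ∀ k : ℕ, 1 ≤ k → k + j.val ≤ m →
      lamHatSeq n S V lamMin lamMax Vmin Vmax β j k ω ≤ lamF j := by
  intro p
  induction p with
  | zero => intro j hj; omega
  | succ p ih =>
    intro j hj k hk hkm
    rw [lamHatSeq]
    set prevF : Fin m → ℝ := fun ℓ =>
      if hl : ℓ < j then lamHatSeq n S V lamMin lamMax Vmin Vmax β ℓ (k + 1) ω else 0 with hprevF
    have hprev : ∀ l, l < j → prevF l ≤ lamF l := by
      intro l hl
      have h1 : prevF l = lamHatSeq n S V lamMin lamMax Vmin Vmax β l (k + 1) ω := by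
        rw [hprevF]; simp only [dif_pos hl]
      rw [h1]
      exact ih l (by omega) (k + 1) (by omega) (by omega)
    have hn1 : (0:ℝ) < (n : ℝ) + 1 := by positivity
    -- the candidate lamF j belongs to the UPlus set
    have hgp : gPlusSeq n S V Vmax j (Function.update prevF j (lamF j)) ω
        ≤ β j - ((k : ℝ) - 1) * ((Vmax j - Vmin j) / ((n : ℝ) + 1)) := by
      have hsum : ∑ i ∈ Finset.range n, lossSeq S V j i (Function.update prevF j (lamF j)) ω
          ≤ ∑ i ∈ Finset.range n, lossSeq S V j i lamF ω := by
        refine Finset.sum_le_sum fun i hi => ?_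
        unfold lossSeq
        refine mul_le_mul_of_nonneg_left ?_ (hVnn i (Finset.mem_range.1 hi) j)
        by_cases hc : (∀ l, l < j → S i l ω ≤ Function.update prevF j (lamF j) l)
            ∧ Function.update prevF j (lamF j) j < S i j ω
        · rw [if_pos hc]
          rw [if_pos]
          constructor
          · intro l hl
            have := hc.1 l hl
            rw [Function.update_of_ne (Fin.ne_of_lt hl)] at this
            exact this.trans (hprev l hl)
          · have := hc.2
            rwa [Function.update_self] at this
        · rw [if_neg hc]; positivity
      have hkm1 : ((k : ℝ) - 1) * ((Vmax j - Vmin j) / ((n : ℝ) + 1))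
          ≤ (m : ℝ) * ((Vmax j - Vmin j) / ((n : ℝ) + 1)) := by
        have hk1 : (k : ℝ) - 1 ≤ (m : ℝ) := by
          have : k ≤ m := by omega
          have h2 : (k:ℝ) ≤ (m:ℝ) := Nat.cast_le.2 this
          linarith
        have : 0 ≤ (Vmax j - Vmin j) / ((n : ℝ) + 1) := div_nonneg (hVmm j) hn1.le
        exact mul_le_mul_of_nonneg_right hk1 this
      unfold gPlusSeq
      have h1 : (1 / ((n : ℝ) + 1)) * ∑ i ∈ Finset.range n,
          lossSeq S V j i (Function.update prevF j (lamF j)) ω ≤ a j := by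
        calc (1 / ((n : ℝ) + 1)) * ∑ i ∈ Finset.range n,
            lossSeq S V j i (Function.update prevF j (lamF j)) ω
            ≤ (1 / ((n : ℝ) + 1)) * ((n : ℝ) * a j) := by
              refine mul_le_mul_of_nonneg_left (hsum.trans (hemp j)) (by positivity)
          _ ≤ a j := by
              rw [div_mul_eq_mul_div, one_mul, div_le_iff₀ hn1]
              nlinarith [ha0 j, Nat.cast_nonneg (α := ℝ) n]
      have := hbudget j
      linarith
    have hmemj : lamF j ∈ insert (lamMax j)
        {x | x ∈ Icc (lamMin j) (lamMax j) ∧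
          gPlusSeq n S V Vmax j (Function.update prevF j x) ω
            ≤ β j - ((k : ℝ) - 1) * ((Vmax j - Vmin j) / ((n : ℝ) + 1))} :=
      mem_insert_of_mem _ ⟨hmem j, hgp⟩
    refine csInf_le ⟨lamMin j, ?_⟩ hmemj
    rintro y (rfl | hy)
    · exact (hmem j).1.trans (hmem j).2
    · exact hy.1.1


lemma ae_transfer {E : Type*} [MeasurableSpace E] (μ : Measure Ω) (Y : ℕ → Ω → E)
    (hY : ∀ i, Measurable (Y i))
    (hid : ∀ i, Measure.map (Y i) μ = Measure.map (Y 0) μ)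
    {p : E → Prop} (hp : MeasurableSet {q | p q})
    (h0 : ∀ᵐ ω ∂μ, p (Y 0 ω)) (i : ℕ) : ∀ᵐ ω ∂μ, p (Y i ω) := by
  have h1 : ∀ᵐ q ∂(Measure.map (Y 0) μ), p q := (ae_map_iff (hY 0).aemeasurable hp).2 h0
  rw [← hid i] at h1
  exact (ae_map_iff (hY i).aemeasurable hp).1 h1

lemma int_transfer {E : Type*} [MeasurableSpace E] (μ : Measure Ω) (Y : ℕ → Ω → E)
    (hY : ∀ i, Measurable (Y i))
    (hid : ∀ i, Measure.map (Y i) μ = Measure.map (Y 0) μ)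
    (F : E → ℝ) (hF : Measurable F) (i : ℕ) :
    ∫ ω, F (Y i ω) ∂μ = ∫ ω, F (Y 0 ω) ∂μ := by
  rw [← integral_map (hY i).aemeasurable hF.aestronglyMeasurable, hid i,
    integral_map (hY 0).aemeasurable hF.aestronglyMeasurable]



end MultiriskAuxSection

/-- Theorem: improved near-optimality of the MULTIRISK objective for discrete
scores.  Under i.i.d. datapoints, feasibility, bounded constraint and objective costs, finitely
supported scores, non-degenerate risk levels at all indices, and
`λ_j^{*,(2)} ∈ (λ_j^min, λ_j^max)` for all `j`, there are `C > 0` and `N` such that for all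
`n ≥ N` and every population minimizer `λ*`,
`E[V_{m+1}·1{S ≤ λ̂^{(2)}(n)}] ≤ E[V_{m+1}·1{S ≤ λ*}] + C·exp(−n^{0.99})`, where the fresh test
datapoint is datapoint `n` (independent of the first `n` datapoints, indices `0,…,n−1`). -/

theorem multirisk_objective_near_optimal_discrete
    {Ω : Type*} [MeasurableSpace Ω] (μ : Measure Ω) [IsProbabilityMeasure μ]
    (m : ℕ) (hm : 1 ≤ m)
    (S V : ℕ → Fin m → Ω → ℝ) (Vobj : ℕ → Ω → ℝ)
    (hSmeas : ∀ i j, Measurable (S i j)) (hVmeas : ∀ i j, Measurable (V i j))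
    (hVobjmeas : ∀ i, Measurable (Vobj i))
    -- i.i.d. datapoints
    (hindep : ProbabilityTheory.iIndepFun
      (fun i ω => ((fun j => S i j ω), (fun j => V i j ω), Vobj i ω)) μ)
    (hident : ∀ i : ℕ,
      Measure.map (fun ω => ((fun j => S i j ω), (fun j => V i j ω), Vobj i ω)) μ
        = Measure.map (fun ω => ((fun j => S 0 j ω), (fun j => V 0 j ω), Vobj 0 ω)) μ)
    -- threshold domains Λ_j = [λ_j^min, λ_j^max]
    (lamMin lamMax : Fin m → ℝ) (hΛ : ∀ j, lamMin j ≤ lamMax j)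
    -- risk budgets and feasibility
    (β : Fin m → ℝ) (hβ : ∀ j, 0 ≤ β j)
    (hfeas : ∀ j : Fin m, ∀ᵐ ω ∂μ, lossSeq S V j 0 lamMax ω ≤ β j)
    -- bounded constraint costs
    (Vmin Vmax : Fin m → ℝ) (hVmin0 : ∀ j, 0 ≤ Vmin j) (hVle : ∀ j, Vmin j ≤ Vmax j)
    (hVbd : ∀ j : Fin m, ∀ᵐ ω ∂μ, V 0 j ω ∈ Icc (Vmin j) (Vmax j))
    -- bounded objective cost
    (VminObj VmaxObj : ℝ) (hVobj0 : 0 ≤ VminObj) (hVobjle : VminObj ≤ VmaxObj)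
    (hVobjbd : ∀ᵐ ω ∂μ, Vobj 0 ω ∈ Icc VminObj VmaxObj)
    -- every score has finite support
    (hdisc : ∀ j : Fin m, ∃ 𝒮 : Finset ℝ, ∀ᵐ ω ∂μ, S 0 j ω ∈ (𝒮 : Set ℝ))
    -- non-degenerate risk levels at all indices
    (hnondeg : ∀ j : Fin m,
      β j ∉ Set.range (fun x : ℝ => gStarSeq μ S V j
        (Function.update (fun ℓ => lamStarSeq μ S V lamMin lamMax β ℓ) j x)))
    -- λ_j^{*,(2)} ∈ (λ_j^min, λ_j^max)
    (hstar : ∀ j : Fin m,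
      lamStarSeq μ S V lamMin lamMax β j ∈ Ioo (lamMin j) (lamMax j)) :
    ∃ C : ℝ, 0 < C ∧ ∃ N : ℕ, ∀ n : ℕ, N ≤ n →
      ∀ lamst : Fin m → ℝ,
        (∀ j : Fin m, lamst j ∈ Icc (lamMin j) (lamMax j)) →
        (∀ j : Fin m, gStarSeq μ S V j lamst ≤ β j) →
        (∀ lam' : Fin m → ℝ, (∀ j : Fin m, lam' j ∈ Icc (lamMin j) (lamMax j)) →
          (∀ j : Fin m, gStarSeq μ S V j lam' ≤ β j) →
          (∫ ω, Vobj 0 ω * (if ∀ j : Fin m, S 0 j ω ≤ lamst j then 1 else 0) ∂μ)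
            ≤ ∫ ω, Vobj 0 ω * (if ∀ j : Fin m, S 0 j ω ≤ lam' j then 1 else 0) ∂μ) →
        (∫ ω, Vobj n ω *
            (if ∀ j : Fin m,
                S n j ω ≤ lamHatSeq n S V lamMin lamMax Vmin Vmax β j 1 ω
             then 1 else 0) ∂μ)
          ≤ (∫ ω, Vobj n ω * (if ∀ j : Fin m, S n j ω ≤ lamst j then 1 else 0) ∂μ)
              + C * Real.exp (-(n : ℝ) ^ (0.99 : ℝ)) := by
  haveI : Nonempty (Fin m) := ⟨⟨0, hm⟩⟩
  set lamF : Fin m → ℝ := fun ℓ => lamStarSeq μ S V lamMin lamMax β ℓ with hlamF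
  have hbd0 : ∀ j : Fin m, ∀ᵐ ω ∂μ, V 0 j ω ∈ Icc 0 (Vmax j) := by
    intro j; filter_upwards [hVbd j] with ω h; exact ⟨(hVmin0 j).trans h.1, h.2⟩
  -- the datapoint maps
  have hYmeas : ∀ i, Measurable
      (fun ω => (((fun j => S i j ω), (fun j => V i j ω), Vobj i ω) :
        (Fin m → ℝ) × (Fin m → ℝ) × ℝ)) := fun i =>
    (measurable_pi_lambda _ (fun j => hSmeas i j)).prod
      ((measurable_pi_lambda _ (fun j => hVmeas i j)).prod (hVobjmeas i))
  -- a.e. facts for every datapoint, by identical distribution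
  have hVbd_i : ∀ (i : ℕ) (j : Fin m), ∀ᵐ ω ∂μ, V i j ω ∈ Icc (Vmin j) (Vmax j) := by
    intro i j
    exact ae_transfer μ _ hYmeas hident
      (p := fun q : (Fin m → ℝ) × (Fin m → ℝ) × ℝ => q.2.1 j ∈ Icc (Vmin j) (Vmax j))
      (measurableSet_Icc.preimage
        (by fun_prop : Measurable (fun q : (Fin m → ℝ) × (Fin m → ℝ) × ℝ => q.2.1 j)))
      (hVbd j) i
  have hVobj_i : ∀ i : ℕ, ∀ᵐ ω ∂μ, Vobj i ω ∈ Icc VminObj VmaxObj := by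
    intro i
    exact ae_transfer μ _ hYmeas hident
      (p := fun q : (Fin m → ℝ) × (Fin m → ℝ) × ℝ => q.2.2 ∈ Icc VminObj VmaxObj)
      (measurableSet_Icc.preimage
        (by fun_prop : Measurable (fun q : (Fin m → ℝ) × (Fin m → ℝ) × ℝ => q.2.2))) hVobjbd i
  -- step B : strict gap
  have hgap : ∀ j : Fin m, gStarSeq μ S V j lamF < β j :=
    gStar_lamStar_lt μ hSmeas hVmeas lamMin lamMax β Vmax hΛ hbd0 hdisc hnondeg hstar
  have hG0 : ∀ j : Fin m, 0 ≤ gStarSeq μ S V j lamF := fun j =>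
    gStar_nonneg μ (hbd0 j) lamF
  -- the empirical loss variables and their concentration
  have hgmeas : ∀ j : Fin m, Measurable (fun q : (Fin m → ℝ) × (Fin m → ℝ) × ℝ =>
      q.2.1 j * (if (∀ l, l < j → q.1 l ≤ lamF l) ∧ lamF j < q.1 j then 1 else 0)) := by
    intro j
    refine Measurable.mul
      (by fun_prop : Measurable (fun q : (Fin m → ℝ) × (Fin m → ℝ) × ℝ => q.2.1 j)) ?_
    refine Measurable.ite ?_ measurable_const measurable_const
    refine MeasurableSet.inter ?_ ?_
    · have heq : {q : (Fin m → ℝ) × (Fin m → ℝ) × ℝ | ∀ l, l < j → q.1 l ≤ lamF l}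
          = ⋂ l, {q : (Fin m → ℝ) × (Fin m → ℝ) × ℝ | l < j → q.1 l ≤ lamF l} := by
        ext q; simp
      show MeasurableSet {q : (Fin m → ℝ) × (Fin m → ℝ) × ℝ | ∀ l, l < j → q.1 l ≤ lamF l}
      rw [heq]
      refine MeasurableSet.iInter fun l => ?_
      by_cases hl : l < j
      · simp only [hl, forall_true_left]
        exact measurableSet_le
          (by fun_prop : Measurable (fun q : (Fin m → ℝ) × (Fin m → ℝ) × ℝ => q.1 l))
          measurable_const
      · simp only [hl, false_implies, setOf_true]
        exact MeasurableSet.univ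
    · exact measurableSet_lt measurable_const
        (by fun_prop : Measurable (fun q : (Fin m → ℝ) × (Fin m → ℝ) × ℝ => q.1 j))
  have hXmeas : ∀ (j : Fin m) (i : ℕ), Measurable (fun ω => lossSeq S V j i lamF ω) :=
    fun j i => measurable_loss hSmeas hVmeas j i lamF
  have hchern : ∀ j : Fin m, ∃ c : ℝ, 0 < c ∧ ∀ n : ℕ,
      (μ {ω | (n : ℝ) * (gStarSeq μ S V j lamF + (β j - gStarSeq μ S V j lamF) / 2)
        ≤ ∑ i ∈ Finset.range n, lossSeq S V j i lamF ω}).toReal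
        ≤ Real.exp (-(c * n)) := by
    intro j
    refine chernoff_aux μ (fun i ω => lossSeq S V j i lamF ω) (hXmeas j) ?_ (Vmax j + 1)
      (by linarith [(hVmin0 j), hVle j]) ?_ ?_ (gStarSeq μ S V j lamF)
      ((β j - gStarSeq μ S V j lamF) / 2) rfl (by linarith [hgap j])
    · exact hindep.comp (fun _ => _) (fun _ => hgmeas j)
    · intro i
      filter_upwards [hVbd_i i j] with ω hω
      refine ⟨loss_nonneg ((hVmin0 j).trans hω.1), loss_le ((hVmin0 j).trans hω.1)
        (hω.2.trans (by linarith))⟩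
    · intro i t
      show (∫ ω, Real.exp (t * lossSeq S V j i lamF ω) ∂μ)
          = ∫ ω, Real.exp (t * lossSeq S V j 0 lamF ω) ∂μ
      exact int_transfer μ _ hYmeas hident
        (fun q : (Fin m → ℝ) × (Fin m → ℝ) × ℝ => Real.exp (t *
          (q.2.1 j * (if (∀ l, l < j → q.1 l ≤ lamF l) ∧ lamF j < q.1 j then 1 else 0))))
        (((hgmeas j).const_mul t).exp) i
  choose c hcpos hcbound using hchern
  -- constants
  set cmin : ℝ := Finset.univ.inf' Finset.univ_nonempty c with hcmin
  have hcminpos : 0 < cmin := by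
    rw [hcmin, Finset.lt_inf'_iff]
    exact fun j _ => hcpos j
  have hcminle : ∀ j, cmin ≤ c j := fun j => Finset.inf'_le _ (Finset.mem_univ j)
  set N₀ : ℕ := ⌈Finset.univ.sup' Finset.univ_nonempty
    (fun j => 2 * (Vmax j + m * (Vmax j - Vmin j)) / (β j - gStarSeq μ S V j lamF))⌉₊ with hN₀
  set N₁ : ℕ := ⌈(1 / cmin) ^ (100 : ℝ)⌉₊ + 1 with hN₁
  refine ⟨VmaxObj * m + 1,
    by have := mul_nonneg (hVobj0.trans hVobjle) (Nat.cast_nonneg (α := ℝ) m); linarith,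
    max N₀ N₁, ?_⟩
  intro n hn lamst hstmem hstfeas _hstopt
  have hnN₀ : N₀ ≤ n := le_trans (le_max_left _ _) hn
  have hnN₁ : N₁ ≤ n := le_trans (le_max_right _ _) hn
  have hn1 : (0:ℝ) < (n : ℝ) + 1 := by positivity
  -- budget condition from N₀
  have hbudget : ∀ j : Fin m, Vmax j / ((n:ℝ)+1) + (m:ℝ) * ((Vmax j - Vmin j)/((n:ℝ)+1))
      ≤ (β j - gStarSeq μ S V j lamF) / 2 := by
    intro j
    have hηj : 0 < β j - gStarSeq μ S V j lamF := by linarith [hgap j]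
    have h1 : 2 * (Vmax j + m * (Vmax j - Vmin j)) / (β j - gStarSeq μ S V j lamF)
        ≤ (n:ℝ) + 1 := by
      calc 2 * (Vmax j + m * (Vmax j - Vmin j)) / (β j - gStarSeq μ S V j lamF)
          ≤ Finset.univ.sup' Finset.univ_nonempty
            (fun j => 2 * (Vmax j + m * (Vmax j - Vmin j)) / (β j - gStarSeq μ S V j lamF)) :=
            Finset.le_sup'
              (fun j => 2 * (Vmax j + m * (Vmax j - Vmin j)) / (β j - gStarSeq μ S V j lamF))
              (Finset.mem_univ j)
        _ ≤ (N₀ : ℝ) := Nat.le_ceil _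
        _ ≤ (n : ℝ) := Nat.cast_le.2 hnN₀
        _ ≤ (n : ℝ) + 1 := by linarith
    rw [div_le_iff₀ hηj] at h1
    have hexp : Vmax j / ((n:ℝ)+1) + (m:ℝ) * ((Vmax j - Vmin j)/((n:ℝ)+1))
        = (Vmax j + m * (Vmax j - Vmin j)) / ((n:ℝ)+1) := by ring
    rw [hexp, div_le_div_iff₀ hn1 (by norm_num : (0:ℝ) < 2)]
    linarith
  -- exponential comparison from N₁
  have hexpcmp : Real.exp (-(cmin * n)) ≤ Real.exp (-(n : ℝ) ^ (0.99 : ℝ)) := by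
    refine Real.exp_le_exp.2 (neg_le_neg ?_)
    have hn1' : (1:ℕ) ≤ n := le_trans (by omega) hnN₁
    have hnpos : (0:ℝ) < (n:ℝ) := by exact_mod_cast hn1'
    have hcast : (1 / cmin) ^ (100 : ℝ) ≤ (n : ℝ) := by
      calc (1 / cmin) ^ (100 : ℝ) ≤ (⌈(1 / cmin) ^ (100 : ℝ)⌉₊ : ℝ) := Nat.le_ceil _
        _ ≤ (n : ℝ) := by
            have : N₁ ≤ n := hnN₁
            have h2 : (⌈(1 / cmin) ^ (100 : ℝ)⌉₊ : ℕ) ≤ n := by omega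
            exact_mod_cast h2
    have h001 : 1 / cmin ≤ (n : ℝ) ^ (0.01 : ℝ) := by
      have h₁ : ((1 / cmin) ^ (100 : ℝ)) ^ (0.01 : ℝ) ≤ (n : ℝ) ^ (0.01 : ℝ) :=
        Real.rpow_le_rpow (Real.rpow_nonneg (by positivity) _) hcast (by norm_num)
      rwa [← Real.rpow_mul (by positivity), show (100 : ℝ) * 0.01 = 1 by norm_num,
        Real.rpow_one] at h₁
    have hsplit : (n : ℝ) = (n : ℝ) ^ (0.99 : ℝ) * (n : ℝ) ^ (0.01 : ℝ) := by
      rw [← Real.rpow_add hnpos, show (0.99 : ℝ) + 0.01 = 1 by norm_num, Real.rpow_one]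
    have hp99 : (0:ℝ) ≤ (n : ℝ) ^ (0.99 : ℝ) := Real.rpow_nonneg hnpos.le _
    have hkey : 1 ≤ cmin * (n : ℝ) ^ (0.01 : ℝ) := by
      have := mul_le_mul_of_nonneg_left h001 hcminpos.le
      rwa [mul_one_div, div_self hcminpos.ne'] at this
    calc (n : ℝ) ^ (0.99 : ℝ) = (n : ℝ) ^ (0.99 : ℝ) * 1 := by ring
      _ ≤ (n : ℝ) ^ (0.99 : ℝ) * (cmin * (n : ℝ) ^ (0.01 : ℝ)) := by
          exact mul_le_mul_of_nonneg_left hkey hp99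
      _ = cmin * ((n : ℝ) ^ (0.99 : ℝ) * (n : ℝ) ^ (0.01 : ℝ)) := by ring
      _ = cmin * n := by rw [← hsplit]
  -- bad event
  set Bset : Fin m → Set Ω := fun j =>
    {ω | (n : ℝ) * (gStarSeq μ S V j lamF + (β j - gStarSeq μ S V j lamF) / 2)
      ≤ ∑ i ∈ Finset.range n, lossSeq S V j i lamF ω} with hBset
  have hBmeas : ∀ j, MeasurableSet (Bset j) := fun j =>
    measurableSet_le measurable_const (Finset.measurable_sum _ (fun i _ => hXmeas j i))
  set Bad : Set Ω := ⋃ j, Bset j with hBad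
  have hBadmeas : MeasurableSet Bad := MeasurableSet.iUnion hBmeas
  -- a.e. inequality between integrands
  have hae_all : ∀ᵐ ω ∂μ, ∀ i ∈ Finset.range n, ∀ j : Fin m,
      V i j ω ∈ Icc (Vmin j) (Vmax j) :=
    (ae_ball_iff (Finset.range n).countable_toSet).2 fun i _ =>
      ae_all_iff.2 fun j => hVbd_i i j
  have hmaj : ∀ᵐ ω ∂μ,
      Vobj n ω * (if ∀ j : Fin m,
          S n j ω ≤ lamHatSeq n S V lamMin lamMax Vmin Vmax β j 1 ω then 1 else 0)
      ≤ Vobj n ω * (if ∀ j : Fin m, S n j ω ≤ lamF j then 1 else 0)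
          + Bad.indicator (fun _ => VmaxObj) ω := by
    filter_upwards [hVobj_i n, hae_all] with ω hVo hVa
    have hVo0 : 0 ≤ Vobj n ω := hVobj0.trans hVo.1
    by_cases hB : ω ∈ Bad
    · rw [indicator_of_mem hB]
      have h1 : Vobj n ω * (if ∀ j : Fin m,
          S n j ω ≤ lamHatSeq n S V lamMin lamMax Vmin Vmax β j 1 ω then 1 else 0)
          ≤ VmaxObj := by
        split_ifs
        · simpa using hVo.2
        · simpa using hVobj0.trans hVobjle
      have h2 : 0 ≤ Vobj n ω * (if ∀ j : Fin m, S n j ω ≤ lamF j then 1 else 0) := by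
        positivity
      linarith
    · rw [indicator_of_notMem hB, add_zero]
      -- on the good event, all the data-driven thresholds sit below λ*
      have hkey : ∀ j : Fin m, lamHatSeq n S V lamMin lamMax Vmin Vmax β j 1 ω ≤ lamF j := by
        intro j
        refine lamHat_le_core n S V lamMin lamMax Vmin Vmax β lamF ω
          (fun j => ⟨(hstar j).1.le, (hstar j).2.le⟩)
          (fun i hi j' => (hVmin0 j').trans
            (hVa i (Finset.mem_range.2 hi) j').1)
          (fun j' => by linarith [hVle j'])
          (fun j' => gStarSeq μ S V j' lamF + (β j' - gStarSeq μ S V j' lamF) / 2)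
          (fun j' => by linarith [hG0 j', hgap j'])
          (fun j' => ?_) (fun j' => ?_) m j j.isLt 1 le_rfl (by omega)
        · have : ω ∉ Bset j' := fun hmem => hB (mem_iUnion.2 ⟨j', hmem⟩)
          have hlt : ¬ ((n : ℝ) * (gStarSeq μ S V j' lamF
              + (β j' - gStarSeq μ S V j' lamF) / 2)
              ≤ ∑ i ∈ Finset.range n, lossSeq S V j' i lamF ω) := this
          linarith [not_le.1 hlt]
        · have := hbudget j'
          linarith
      refine mul_le_mul_of_nonneg_left ?_ hVo0
      split_ifs with h1 h2
      · exact le_refl 1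
      · exact absurd (fun j => (h1 j).trans (hkey j)) h2
      · norm_num
      · exact le_refl 0
  -- final assembly
  have hVmaxObj0 : 0 ≤ VmaxObj := hVobj0.trans hVobjle
  by_cases hfm : AEStronglyMeasurable (fun ω => Vobj n ω *
      (if ∀ j : Fin m, S n j ω ≤ lamHatSeq n S V lamMin lamMax Vmin Vmax β j 1 ω
        then 1 else 0)) μ
  case neg =>
    rw [integral_undef (fun hI => hfm hI.1)]
    have h1 : 0 ≤ ∫ ω, Vobj n ω * (if ∀ j : Fin m, S n j ω ≤ lamst j then 1 else 0) ∂μ := by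
      refine integral_nonneg_of_ae ?_
      filter_upwards [hVobj_i n] with ω hω
      have h0 : 0 ≤ Vobj n ω := hVobj0.trans hω.1
      positivity
    have h2 : 0 < (VmaxObj * m + 1) * Real.exp (-(n : ℝ) ^ (0.99 : ℝ)) := by
      have := mul_nonneg hVmaxObj0 (Nat.cast_nonneg (α := ℝ) m)
      positivity
    linarith
  case pos =>
  have hf_int : Integrable (fun ω => Vobj n ω *
      (if ∀ j : Fin m, S n j ω ≤ lamHatSeq n S V lamMin lamMax Vmin Vmax β j 1 ω
        then 1 else 0)) μ := by
    refine ⟨hfm, HasFiniteIntegral.of_bounded (C := VmaxObj) ?_⟩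
    filter_upwards [hVobj_i n] with ω hω
    have h0 : 0 ≤ Vobj n ω := hVobj0.trans hω.1
    rw [Real.norm_eq_abs, abs_of_nonneg (by positivity)]
    split_ifs
    · simpa using hω.2
    · simpa using hVmaxObj0
  have hmeas_obj : ∀ (i : ℕ) (lam : Fin m → ℝ), Measurable (fun ω => Vobj i ω *
      (if ∀ j : Fin m, S i j ω ≤ lam j then 1 else 0)) := by
    intro i lam
    refine (hVobjmeas i).mul ?_
    refine Measurable.ite ?_ measurable_const measurable_const
    have heq : {ω | ∀ j : Fin m, S i j ω ≤ lam j} = ⋂ j, {ω | S i j ω ≤ lam j} := by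
      ext ω; simp
    show MeasurableSet {ω | ∀ j : Fin m, S i j ω ≤ lam j}
    rw [heq]
    exact MeasurableSet.iInter fun j => measurableSet_le (hSmeas i j) measurable_const
  have hint_obj : ∀ (i : ℕ) (lam : Fin m → ℝ), Integrable (fun ω => Vobj i ω *
      (if ∀ j : Fin m, S i j ω ≤ lam j then 1 else 0)) μ := by
    intro i lam
    refine ⟨(hmeas_obj i lam).aestronglyMeasurable,
      HasFiniteIntegral.of_bounded (C := VmaxObj) ?_⟩
    filter_upwards [hVobj_i i] with ω hω
    have h0 : 0 ≤ Vobj i ω := hVobj0.trans hω.1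
    rw [Real.norm_eq_abs, abs_of_nonneg (by positivity)]
    split_ifs
    · simpa using hω.2
    · simpa using hVmaxObj0
  have hind_int : Integrable (Bad.indicator (fun _ => VmaxObj)) μ :=
    (integrable_const VmaxObj).indicator hBadmeas
  have hstep1 : (∫ ω, Vobj n ω *
      (if ∀ j : Fin m, S n j ω ≤ lamHatSeq n S V lamMin lamMax Vmin Vmax β j 1 ω
        then 1 else 0) ∂μ)
      ≤ (∫ ω, Vobj n ω * (if ∀ j : Fin m, S n j ω ≤ lamF j then 1 else 0) ∂μ)
        + ∫ ω, Bad.indicator (fun _ => VmaxObj) ω ∂μ := by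
    rw [← integral_add (hint_obj n lamF) hind_int]
    exact integral_mono_ae hf_int ((hint_obj n lamF).add hind_int) hmaj
  have htrans : ∀ lam : Fin m → ℝ,
      (∫ ω, Vobj n ω * (if ∀ j : Fin m, S n j ω ≤ lam j then 1 else 0) ∂μ)
        = ∫ ω, Vobj 0 ω * (if ∀ j : Fin m, S 0 j ω ≤ lam j then 1 else 0) ∂μ := by
    intro lam
    refine int_transfer μ _ hYmeas hident
      (fun q : (Fin m → ℝ) × (Fin m → ℝ) × ℝ =>
        q.2.2 * (if ∀ j : Fin m, q.1 j ≤ lam j then 1 else 0)) ?_ n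
    refine Measurable.mul
      (by fun_prop : Measurable (fun q : (Fin m → ℝ) × (Fin m → ℝ) × ℝ => q.2.2)) ?_
    refine Measurable.ite ?_ measurable_const measurable_const
    have heq : {q : (Fin m → ℝ) × (Fin m → ℝ) × ℝ | ∀ j : Fin m, q.1 j ≤ lam j}
        = ⋂ j, {q : (Fin m → ℝ) × (Fin m → ℝ) × ℝ | q.1 j ≤ lam j} := by
      ext q; simp
    show MeasurableSet {q : (Fin m → ℝ) × (Fin m → ℝ) × ℝ | ∀ j : Fin m, q.1 j ≤ lam j}
    rw [heq]
    exact MeasurableSet.iInter fun j => measurableSet_le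
      (by fun_prop : Measurable (fun q : (Fin m → ℝ) × (Fin m → ℝ) × ℝ => q.1 j))
      measurable_const
  have hAles : ∀ j : Fin m, lamF j ≤ lamst j := fun j =>
    lamStar_le_feasible μ hSmeas hVmeas lamMin lamMax β Vmax hbd0 lamst hstmem hstfeas
      m j j.isLt
  have hobj_mono : (∫ ω, Vobj 0 ω * (if ∀ j : Fin m, S 0 j ω ≤ lamF j then 1 else 0) ∂μ)
      ≤ ∫ ω, Vobj 0 ω * (if ∀ j : Fin m, S 0 j ω ≤ lamst j then 1 else 0) ∂μ := by
    refine integral_mono_ae (hint_obj 0 lamF) (hint_obj 0 lamst) ?_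
    filter_upwards [hVobjbd] with ω hω
    have h0 : 0 ≤ Vobj 0 ω := hVobj0.trans hω.1
    refine mul_le_mul_of_nonneg_left ?_ h0
    split_ifs with hA hB
    · exact le_refl 1
    · exact absurd (fun j => (hA j).trans (hAles j)) hB
    · norm_num
    · exact le_refl 0
  have hbadle : (μ Bad).toReal ≤ (m : ℝ) * Real.exp (-(n : ℝ) ^ (0.99 : ℝ)) := by
    have h1 : μ Bad ≤ ∑ j : Fin m, μ (Bset j) := measure_iUnion_fintype_le μ Bset
    have hne : ∀ j ∈ Finset.univ, μ (Bset j) ≠ ⊤ := fun j _ => measure_ne_top μ _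
    have h2 : (μ Bad).toReal ≤ (∑ j : Fin m, μ (Bset j)).toReal := by
      refine ENNReal.toReal_mono ?_ h1
      exact (ENNReal.sum_lt_top.2 fun j hj => lt_of_le_of_ne le_top (hne j hj)).ne
    rw [ENNReal.toReal_sum hne] at h2
    have h3 : ∀ j : Fin m, (μ (Bset j)).toReal ≤ Real.exp (-(n : ℝ) ^ (0.99 : ℝ)) := by
      intro j
      refine le_trans (hcbound j n) (le_trans ?_ hexpcmp)
      refine Real.exp_le_exp.2 (neg_le_neg ?_)
      exact mul_le_mul_of_nonneg_right (hcminle j) (Nat.cast_nonneg n)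
    calc (μ Bad).toReal ≤ ∑ j : Fin m, (μ (Bset j)).toReal := h2
      _ ≤ ∑ _j : Fin m, Real.exp (-(n : ℝ) ^ (0.99 : ℝ)) := Finset.sum_le_sum fun j _ => h3 j
      _ = (m : ℝ) * Real.exp (-(n : ℝ) ^ (0.99 : ℝ)) := by
          rw [Finset.sum_const, Finset.card_univ, Fintype.card_fin, nsmul_eq_mul]
  have hindval : (∫ ω, Bad.indicator (fun _ => VmaxObj) ω ∂μ)
      = (μ Bad).toReal * VmaxObj := by
    rw [integral_indicator_const VmaxObj hBadmeas, smul_eq_mul, Measure.real]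
  have e2 := htrans lamF
  have e4 := htrans lamst
  have e5 : (μ Bad).toReal * VmaxObj
      ≤ ((m : ℝ) * Real.exp (-(n : ℝ) ^ (0.99 : ℝ))) * VmaxObj :=
    mul_le_mul_of_nonneg_right hbadle hVmaxObj0
  have e6 : ((m : ℝ) * Real.exp (-(n : ℝ) ^ (0.99 : ℝ))) * VmaxObj
      ≤ (VmaxObj * m + 1) * Real.exp (-(n : ℝ) ^ (0.99 : ℝ)) := by
    have hep := Real.exp_pos (-(n : ℝ) ^ (0.99 : ℝ))
    nlinarith
  linarith

end
end

section
/- (Controlling the risk via the symmetrized generalized inverse.) Under the stated conditions (exchangeability, feasibility, bounded costs), fix j ∈ {1,…,m}. For any symmetric functions Γ_1,…,Γ_{j−1} of the n+1 datapoints taking values in Λ_1,…,Λ_{j−1} respectively, one has E[L_j^{(n+1)}(Γ_1,…,Γ_{j−1}, U_j^sym(Γ_1,…,Γ_{j−1}; β_j))] ≤ β_j. -/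
open MeasureTheory Set

attribute [local instance] Classical.propDecidable

noncomputable section

/-- The loss `L_j^{(i)}(λ_{1:j}) = V_j^{(i)} · 1{S_1^{(i)} ≤ λ_1, …, S_{j−1}^{(i)} ≤ λ_{j−1},
S_j^{(i)} > λ_j}`.  Only the coordinates `ℓ ≤ j` of the vector `lam` are read. -/
def lossFn {Ω : Type*} {m n : ℕ} (S V : Fin (n + 1) → Fin m → Ω → ℝ)
    (j : Fin m) (i : Fin (n + 1)) (lam : Fin m → ℝ) (ω : Ω) : ℝ :=
  V i j ω * (if (∀ l, l < j → S i l ω ≤ lam l) ∧ lam j < S i j ω then 1 else 0)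

/-- The symmetric oracle risk `g_j^sym(λ_j; λ_{1:(j−1)})`. -/
def gSym {Ω : Type*} {m n : ℕ} (S V : Fin (n + 1) → Fin m → Ω → ℝ)
    (j : Fin m) (lam : Fin m → ℝ) (ω : Ω) : ℝ :=
  (1 / ((n : ℝ) + 1)) * ∑ i : Fin (n + 1), lossFn S V j i lam ω

/-- The bumped empirical risk `g_j^+(λ_j; λ_{1:(j−1)})`. -/
def gPlus {Ω : Type*} {m n : ℕ} (S V : Fin (n + 1) → Fin m → Ω → ℝ) (Vmax : Fin m → ℝ)
    (j : Fin m) (lam : Fin m → ℝ) (ω : Ω) : ℝ :=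
  (1 / ((n : ℝ) + 1)) * ∑ i : Fin n, lossFn S V j i.castSucc lam ω + Vmax j / ((n : ℝ) + 1)

/-- `U_j^sym(λ_{1:(j−1)}; b) = sup{x ∈ Λ_j : g_j^sym(x; λ_{1:(j−1)}) > b}`, the supremum of the
empty set being `λ_j^min` (implemented by inserting `λ_j^min` into the set, which does not change
the supremum of a nonempty subset of `Λ_j`). -/
def USym {Ω : Type*} {m n : ℕ} (S V : Fin (n + 1) → Fin m → Ω → ℝ)
    (lamMin lamMax : Fin m → ℝ) (j : Fin m) (lam : Fin m → ℝ) (b : ℝ) (ω : Ω) : ℝ :=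
  sSup (insert (lamMin j)
    {x | x ∈ Icc (lamMin j) (lamMax j) ∧ b < gSym S V j (Function.update lam j x) ω})

/-- `U_j^+(λ_{1:(j−1)}; b) = inf{x ∈ Λ_j : g_j^+(x; λ_{1:(j−1)}) ≤ b}`, the infimum of the
empty set being `λ_j^max`. -/
def UPlus {Ω : Type*} {m n : ℕ} (S V : Fin (n + 1) → Fin m → Ω → ℝ) (Vmax : Fin m → ℝ)
    (lamMin lamMax : Fin m → ℝ) (j : Fin m) (lam : Fin m → ℝ) (b : ℝ) (ω : Ω) : ℝ :=
  sInf (insert (lamMax j)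
    {x | x ∈ Icc (lamMin j) (lamMax j) ∧ gPlus S V Vmax j (Function.update lam j x) ω ≤ b})

/-- The odd-indexed MULTIRISK thresholds: `lamOdd … j k = λ̂_j^{(2k−1)}
= U_j^sym(λ̂_1^{(2k+1)},…,λ̂_{j−1}^{(2k+1)}; β_j^{(k−1)})`, with `β_j^{(k)} = β_j − k·δ_j`
and `δ_j = (Vmax_j − Vmin_j)/(n+1)`. -/
def lamOdd {Ω : Type*} {m n : ℕ} (S V : Fin (n + 1) → Fin m → Ω → ℝ)
    (lamMin lamMax Vmin Vmax β : Fin m → ℝ) (j : Fin m) (k : ℕ) (ω : Ω) : ℝ :=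
  USym S V lamMin lamMax j
    (fun ℓ => if hl : ℓ < j then lamOdd S V lamMin lamMax Vmin Vmax β ℓ (k + 1) ω else 0)
    (β j - ((k : ℝ) - 1) * ((Vmax j - Vmin j) / ((n : ℝ) + 1))) ω
termination_by j.val
decreasing_by exact hl

/-- The even-indexed MULTIRISK thresholds: `lamEven … j k = λ̂_j^{(2k)}
= U_j^+(λ̂_1^{(2k+2)},…,λ̂_{j−1}^{(2k+2)}; β_j^{(k−1)})`.  In particular `lamEven … j 1` is the
MULTIRISK threshold `λ̂_j^{(2)}`. -/
def lamEven {Ω : Type*} {m n : ℕ} (S V : Fin (n + 1) → Fin m → Ω → ℝ)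
    (lamMin lamMax Vmin Vmax β : Fin m → ℝ) (j : Fin m) (k : ℕ) (ω : Ω) : ℝ :=
  UPlus S V Vmax lamMin lamMax j
    (fun ℓ => if hl : ℓ < j then lamEven S V lamMin lamMax Vmin Vmax β ℓ (k + 1) ω else 0)
    (β j - ((k : ℝ) - 1) * ((Vmax j - Vmin j) / ((n : ℝ) + 1))) ω
termination_by j.val
decreasing_by exact hl

namespace RiskAux

abbrev Dat (m n : ℕ) := Fin (n + 1) → (Fin m → ℝ) × (Fin m → ℝ)

def Dof {Ω : Type*} {m n : ℕ} (S V : Fin (n + 1) → Fin m → Ω → ℝ) : Ω → Dat m n :=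
  fun ω i => ((fun l => S i l ω), (fun l => V i l ω))

def gd {m n : ℕ} (φ : Fin m → (Dat m n → ℝ)) (j : Fin m) (x : ℝ) (d : Dat m n) : ℝ :=
  (1 / ((n : ℝ) + 1)) * ∑ i : Fin (n + 1),
    max 0 ((d i).2 j) * (if (∀ l, l < j → (d i).1 l ≤ φ l d) ∧ x < (d i).1 j then 1 else 0)

def Ud {m n : ℕ} (lamMin lamMax : Fin m → ℝ) (φ : Fin m → (Dat m n → ℝ)) (j : Fin m)
    (b : ℝ) (d : Dat m n) : ℝ :=
  sSup (insert (lamMin j) {x | x ∈ Icc (lamMin j) (lamMax j) ∧ b < gd φ j x d})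

def Fd {m n : ℕ} (lamMin lamMax : Fin m → ℝ) (φ : Fin m → (Dat m n → ℝ)) (j : Fin m)
    (b : ℝ) (d : Dat m n) : ℝ :=
  max 0 ((d (Fin.last n)).2 j) *
    (if (∀ l, l < j → (d (Fin.last n)).1 l ≤ φ l d) ∧
        Ud lamMin lamMax φ j b d < (d (Fin.last n)).1 j then 1 else 0)

lemma gd_anti {m n : ℕ} (φ : Fin m → (Dat m n → ℝ)) (j : Fin m) {x y : ℝ} (hxy : x ≤ y)
    (d : Dat m n) : gd φ j y d ≤ gd φ j x d := by
  unfold gd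
  apply mul_le_mul_of_nonneg_left _ (by positivity)
  apply Finset.sum_le_sum
  intro i _
  apply mul_le_mul_of_nonneg_left _ (le_max_left _ _)
  by_cases h : (∀ l, l < j → (d i).1 l ≤ φ l d) ∧ y < (d i).1 j
  · rw [if_pos h, if_pos ⟨h.1, lt_of_le_of_lt hxy h.2⟩]
  · rw [if_neg h]
    split <;> norm_num

lemma measurableSet_cond {m n : ℕ} (φ : Fin m → (Dat m n → ℝ)) (hφ : ∀ l, Measurable (φ l))
    (j : Fin m) (i : Fin (n + 1)) :
    MeasurableSet {d : Dat m n | ∀ l, l < j → (d i).1 l ≤ φ l d} := by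
  rw [setOf_forall]
  refine MeasurableSet.iInter fun l => ?_
  by_cases hl : l < j
  · simp only [hl, true_implies]
    exact measurableSet_le ((measurable_pi_apply l).comp ((measurable_pi_apply i).fst)) (hφ l)
  · simp only [hl, false_implies, setOf_true]
    exact MeasurableSet.univ

lemma measurable_gd {m n : ℕ} (φ : Fin m → (Dat m n → ℝ)) (hφ : ∀ l, Measurable (φ l))
    (j : Fin m) (x : ℝ) : Measurable (gd φ j x) := by
  apply Measurable.const_mul
  apply Finset.measurable_sum
  intro i _
  have h1 : Measurable fun d : Dat m n => (d i).2 j :=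
    (measurable_pi_apply j).comp ((measurable_pi_apply i).snd)
  have h2 : Measurable fun d : Dat m n => (d i).1 j :=
    (measurable_pi_apply j).comp ((measurable_pi_apply i).fst)
  refine (measurable_const.max h1).mul ?_
  refine Measurable.ite ?_ measurable_const measurable_const
  rw [setOf_and]
  exact (measurableSet_cond φ hφ j i).inter (measurableSet_lt measurable_const h2)

lemma Ud_set_bdd {m n : ℕ} (lamMin lamMax : Fin m → ℝ) (φ : Fin m → (Dat m n → ℝ)) (j : Fin m)
    (b : ℝ) (d : Dat m n) :
    BddAbove (insert (lamMin j) {x | x ∈ Icc (lamMin j) (lamMax j) ∧ b < gd φ j x d}) := by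
  refine ⟨max (lamMin j) (lamMax j), ?_⟩
  rintro y hy
  simp only [Set.mem_insert_iff, mem_setOf_eq, mem_Icc] at hy
  rcases hy with rfl | ⟨⟨-, h2⟩, -⟩
  · exact le_max_left _ _
  · exact le_trans h2 (le_max_right _ _)

lemma lt_Ud_iff {m n : ℕ} (lamMin lamMax : Fin m → ℝ) (φ : Fin m → (Dat m n → ℝ)) (j : Fin m)
    (b c : ℝ) (d : Dat m n) :
    c < Ud lamMin lamMax φ j b d ↔
      c < lamMin j ∨ ∃ q : ℚ, c < (q : ℝ) ∧ lamMin j ≤ (q : ℝ) ∧ (q : ℝ) ≤ lamMax j ∧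
        b < gd φ j (q : ℝ) d := by
  rw [Ud, lt_csSup_iff (Ud_set_bdd lamMin lamMax φ j b d) (insert_nonempty _ _)]
  constructor
  · rintro ⟨y, hy, hcy⟩
    simp only [Set.mem_insert_iff, mem_setOf_eq, mem_Icc] at hy
    rcases hy with rfl | ⟨⟨h1, h2⟩, h3⟩
    · exact Or.inl hcy
    · by_cases hc : c < lamMin j
      · exact Or.inl hc
      · obtain ⟨q, hq1, hq2⟩ := exists_rat_btwn hcy
        refine Or.inr ⟨q, hq1, ?_, le_trans hq2.le h2, lt_of_lt_of_le h3 (gd_anti φ j hq2.le d)⟩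
        exact le_of_lt (lt_of_le_of_lt (not_lt.1 hc) hq1)
  · rintro (hc | ⟨q, hq1, hq2, hq3, hq4⟩)
    · exact ⟨lamMin j, mem_insert _ _, hc⟩
    · exact ⟨(q : ℝ), mem_insert_of_mem _ ⟨mem_Icc.2 ⟨hq2, hq3⟩, hq4⟩, hq1⟩

lemma measurable_Ud {m n : ℕ} (lamMin lamMax : Fin m → ℝ) (φ : Fin m → (Dat m n → ℝ))
    (hφ : ∀ l, Measurable (φ l)) (j : Fin m) (b : ℝ) :
    Measurable (Ud lamMin lamMax φ j b) := by
  apply measurable_of_Ioi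
  intro c
  have hset : Ud lamMin lamMax φ j b ⁻¹' Ioi c =
      {d : Dat m n | c < lamMin j} ∪ ⋃ q : ℚ,
        ({d : Dat m n | c < (q : ℝ) ∧ lamMin j ≤ (q : ℝ) ∧ (q : ℝ) ≤ lamMax j} ∩
          {d : Dat m n | b < gd φ j (q : ℝ) d}) := by
    ext d
    simp only [mem_preimage, mem_Ioi, mem_union, mem_iUnion, mem_inter_iff, mem_setOf_eq,
      lt_Ud_iff]
    tauto
  rw [hset]
  refine MeasurableSet.union (MeasurableSet.const _) (MeasurableSet.iUnion fun q => ?_)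
  exact (MeasurableSet.const _).inter (measurableSet_lt measurable_const (measurable_gd φ hφ j q))

lemma measurable_Fd {m n : ℕ} (lamMin lamMax : Fin m → ℝ) (φ : Fin m → (Dat m n → ℝ))
    (hφ : ∀ l, Measurable (φ l)) (j : Fin m) (b : ℝ) :
    Measurable (Fd lamMin lamMax φ j b) := by
  unfold Fd
  have h1 : Measurable fun d : Dat m n => (d (Fin.last n)).2 j :=
    (measurable_pi_apply j).comp ((measurable_pi_apply (Fin.last n)).snd)
  have h2 : Measurable fun d : Dat m n => (d (Fin.last n)).1 j :=
    (measurable_pi_apply j).comp ((measurable_pi_apply (Fin.last n)).fst)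
  refine (measurable_const.max h1).mul ?_
  refine Measurable.ite ?_ measurable_const measurable_const
  rw [setOf_and]
  exact (measurableSet_cond φ hφ j (Fin.last n)).inter
    (measurableSet_lt (measurable_Ud lamMin lamMax φ hφ j b) h2)

lemma gd_comp_perm {m n : ℕ} (φ : Fin m → (Dat m n → ℝ)) (j : Fin m) (x : ℝ)
    (π : Equiv.Perm (Fin (n + 1))) (d : Dat m n)
    (hφ : ∀ l, φ l (fun i => d (π i)) = φ l d) :
    gd φ j x (fun i => d (π i)) = gd φ j x d := by
  unfold gd
  congr 1
  rw [← Equiv.sum_comp π (fun i =>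
    max 0 ((d i).2 j) * (if (∀ l, l < j → (d i).1 l ≤ φ l d) ∧ x < (d i).1 j then 1 else 0))]
  apply Finset.sum_congr rfl
  intro i _
  simp only [hφ]

lemma Ud_comp_perm {m n : ℕ} (lamMin lamMax : Fin m → ℝ) (φ : Fin m → (Dat m n → ℝ)) (j : Fin m)
    (b : ℝ) (π : Equiv.Perm (Fin (n + 1))) (d : Dat m n)
    (hφ : ∀ l, φ l (fun i => d (π i)) = φ l d) :
    Ud lamMin lamMax φ j b (fun i => d (π i)) = Ud lamMin lamMax φ j b d := by
  unfold Ud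
  have : {x | x ∈ Icc (lamMin j) (lamMax j) ∧ b < gd φ j x (fun i => d (π i))}
      = {x | x ∈ Icc (lamMin j) (lamMax j) ∧ b < gd φ j x d} := by
    ext x
    rw [mem_setOf_eq, mem_setOf_eq, gd_comp_perm φ j x π d hφ]
  rw [this]

lemma measurable_Dof {Ω : Type*} [MeasurableSpace Ω] {m n : ℕ}
    (S V : Fin (n + 1) → Fin m → Ω → ℝ)
    (hS : ∀ i l, Measurable (S i l)) (hV : ∀ i l, Measurable (V i l)) :
    Measurable (Dof S V : Ω → Dat m n) := by
  apply measurable_pi_lambda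
  intro i
  exact Measurable.prod (measurable_pi_lambda _ fun l => hS i l)
    (measurable_pi_lambda _ fun l => hV i l)

end RiskAux

/-- Lemma: controlling the risk via the symmetrized generalized inverse.  Under
exchangeability, feasibility and bounded costs, for any symmetric `Λ_ℓ`-valued functions
`Γ_1,…,Γ_{j−1}` of the `n+1` datapoints,
`E[L_j^{(n+1)}(Γ_{1:(j−1)}, U_j^sym(Γ_{1:(j−1)}; β_j))] ≤ β_j`. -/
theorem risk_control_symmetric_inverse
    {Ω : Type*} [MeasurableSpace Ω] (μ : Measure Ω) [IsProbabilityMeasure μ]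
    (m n : ℕ) (hm : 1 ≤ m) (hn : 1 ≤ n)
    (S V : Fin (n + 1) → Fin m → Ω → ℝ)
    (hSmeas : ∀ i j, Measurable (S i j)) (hVmeas : ∀ i j, Measurable (V i j))
    (lamMin lamMax : Fin m → ℝ) (hΛ : ∀ j, lamMin j ≤ lamMax j)
    (β : Fin m → ℝ) (hβ : ∀ j, 0 ≤ β j)
    (Vmin Vmax : Fin m → ℝ) (hVmin0 : ∀ j, 0 ≤ Vmin j) (hVle : ∀ j, Vmin j ≤ Vmax j)
    (hVbd : ∀ i j, ∀ᵐ ω ∂μ, V i j ω ∈ Icc (Vmin j) (Vmax j))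
    (hexch : ∀ π : Equiv.Perm (Fin (n + 1)),
      Measure.map (fun ω => fun i : Fin (n + 1) =>
          ((fun j => S (π i) j ω), (fun j => V (π i) j ω))) μ
        = Measure.map (fun ω => fun i : Fin (n + 1) =>
          ((fun j => S i j ω), (fun j => V i j ω))) μ)
    (hfeas : ∀ (j : Fin m) (i : Fin (n + 1)), ∀ᵐ ω ∂μ, lossFn S V j i lamMax ω ≤ β j)
    (j : Fin m) (Γ : Fin m → Ω → ℝ)
    -- each Γ_ℓ, ℓ < j, is a symmetric measurable function of the n+1 datapoints,
    -- taking values in Λ_ℓ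
    (hΓsym : ∀ ℓ : Fin m, ℓ < j →
      ∃ φ : (Fin (n + 1) → (Fin m → ℝ) × (Fin m → ℝ)) → ℝ, Measurable φ ∧
        (∀ (π : Equiv.Perm (Fin (n + 1))) (d : Fin (n + 1) → (Fin m → ℝ) × (Fin m → ℝ)),
          φ (fun i => d (π i)) = φ d) ∧
        (∀ ω, Γ ℓ ω = φ (fun i => ((fun l => S i l ω), (fun l => V i l ω)))))
    (hΓrange : ∀ ℓ : Fin m, ℓ < j → ∀ ω, Γ ℓ ω ∈ Icc (lamMin ℓ) (lamMax ℓ)) :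
    ∫ ω, lossFn S V j (Fin.last n)
        (Function.update (fun ℓ => Γ ℓ ω) j
          (USym S V lamMin lamMax j (fun ℓ => Γ ℓ ω) (β j) ω)) ω ∂μ ≤ β j := by
  classical
  have hφex : ∀ ℓ : Fin m, ∃ φ : RiskAux.Dat m n → ℝ, Measurable φ ∧
      (∀ (π : Equiv.Perm (Fin (n + 1))) (d : RiskAux.Dat m n), φ (fun i => d (π i)) = φ d) ∧
      (ℓ < j → ∀ ω, Γ ℓ ω = φ (RiskAux.Dof S V ω)) := by
    intro ℓ
    by_cases h : ℓ < j
    · obtain ⟨φ0, h1, h2, h3⟩ := hΓsym ℓ h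
      exact ⟨φ0, h1, h2, fun _ ω => h3 ω⟩
    · exact ⟨fun _ => 0, measurable_const, fun _ _ => rfl, fun h' => absurd h' h⟩
  choose φf hφmeas hφinv hφval using hφex
  set U : Ω → ℝ := fun ω => USym S V lamMin lamMax j (fun ℓ => Γ ℓ ω) (β j) ω with hUdef
  set lamf : Ω → Fin m → ℝ := fun ω => Function.update (fun ℓ => Γ ℓ ω) j (U ω) with hlamfdef
  show ∫ ω, lossFn S V j (Fin.last n) (lamf ω) ω ∂μ ≤ β j
  have hV0 : ∀ᵐ ω ∂μ, ∀ i : Fin (n + 1), V i j ω ∈ Icc (Vmin j) (Vmax j) :=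
    (MeasureTheory.ae_all_iff).2 fun i => hVbd i j
  have hFe : ∀ᵐ ω ∂μ, ∀ i : Fin (n + 1), lossFn S V j i lamMax ω ≤ β j :=
    (MeasureTheory.ae_all_iff).2 fun i => hfeas j i
  -- pointwise identification of `gd` with `gSym`
  have hterm : ∀ ω, (∀ i : Fin (n + 1), 0 ≤ V i j ω) → ∀ (x : ℝ) (i : Fin (n + 1)),
      max 0 ((RiskAux.Dof S V ω i).2 j) *
        (if (∀ l, l < j → (RiskAux.Dof S V ω i).1 l ≤ φf l (RiskAux.Dof S V ω)) ∧
            x < (RiskAux.Dof S V ω i).1 j then 1 else 0)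
        = lossFn S V j i (Function.update (fun ℓ => Γ ℓ ω) j x) ω := by
    intro ω h0 x i
    show max 0 (V i j ω) *
        (if (∀ l, l < j → S i l ω ≤ φf l (RiskAux.Dof S V ω)) ∧ x < S i j ω then 1 else 0) = _
    simp only [lossFn]
    rw [max_eq_right (h0 i)]
    have hiff : ((∀ l, l < j → S i l ω ≤ φf l (RiskAux.Dof S V ω)) ∧ x < S i j ω)
        ↔ ((∀ l, l < j → S i l ω ≤ Function.update (fun ℓ => Γ ℓ ω) j x l)
            ∧ Function.update (fun ℓ => Γ ℓ ω) j x j < S i j ω) := by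
      rw [Function.update_self]
      constructor
      · rintro ⟨h1, h2⟩
        refine ⟨fun l hl => ?_, h2⟩
        simp only [Function.update_of_ne (ne_of_lt hl)]
        rw [hφval l hl ω]
        exact h1 l hl
      · rintro ⟨h1, h2⟩
        refine ⟨fun l hl => ?_, h2⟩
        have h3 := h1 l hl
        simp only [Function.update_of_ne (ne_of_lt hl)] at h3
        rw [hφval l hl ω] at h3
        exact h3
    rw [if_congr hiff rfl rfl]
  have hgd : ∀ ω, (∀ i : Fin (n + 1), 0 ≤ V i j ω) → ∀ x : ℝ,
      RiskAux.gd φf j x (RiskAux.Dof S V ω)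
        = gSym S V j (Function.update (fun ℓ => Γ ℓ ω) j x) ω := by
    intro ω h0 x
    simp only [RiskAux.gd, gSym]
    congr 1
    exact Finset.sum_congr rfl fun i _ => hterm ω h0 x i
  have hUd : ∀ ω, (∀ i : Fin (n + 1), 0 ≤ V i j ω) →
      RiskAux.Ud lamMin lamMax φf j (β j) (RiskAux.Dof S V ω) = U ω := by
    intro ω h0
    have hset : {x | x ∈ Icc (lamMin j) (lamMax j) ∧
          β j < RiskAux.gd φf j x (RiskAux.Dof S V ω)}
        = {x | x ∈ Icc (lamMin j) (lamMax j) ∧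
          β j < gSym S V j (Function.update (fun ℓ => Γ ℓ ω) j x) ω} := by
      ext x
      rw [mem_setOf_eq, mem_setOf_eq, hgd ω h0 x]
    simp only [RiskAux.Ud]
    rw [hset]
    rfl
  -- pointwise risk bound
  have hrisk : ∀ ω, (∀ i : Fin (n + 1), V i j ω ∈ Icc (Vmin j) (Vmax j)) →
      (∀ i : Fin (n + 1), lossFn S V j i lamMax ω ≤ β j) →
      gSym S V j (lamf ω) ω ≤ β j := by
    intro ω hVb hfe
    have h0 : ∀ i : Fin (n + 1), 0 ≤ V i j ω := fun i => le_trans (hVmin0 j) (hVb i).1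
    have havg : ∀ x : ℝ, (∀ i : Fin (n + 1),
        lossFn S V j i (Function.update (fun ℓ => Γ ℓ ω) j x) ω ≤ β j) →
        gSym S V j (Function.update (fun ℓ => Γ ℓ ω) j x) ω ≤ β j := by
      intro x hx
      simp only [gSym]
      have hb : ∑ i : Fin (n + 1), lossFn S V j i (Function.update (fun ℓ => Γ ℓ ω) j x) ω
          ≤ ∑ _i : Fin (n + 1), β j := Finset.sum_le_sum fun i _ => hx i
      have h2 : (1 / ((n : ℝ) + 1)) *
          (∑ i : Fin (n + 1), lossFn S V j i (Function.update (fun ℓ => Γ ℓ ω) j x) ω)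
          ≤ (1 / ((n : ℝ) + 1)) * ∑ _i : Fin (n + 1), β j :=
        mul_le_mul_of_nonneg_left hb (by positivity)
      refine le_trans h2 ?_
      rw [Finset.sum_const, Finset.card_univ, Fintype.card_fin, nsmul_eq_mul]
      have hne : ((n : ℝ) + 1) ≠ 0 := by positivity
      push_cast
      rw [← mul_assoc, one_div_mul_cancel hne, one_mul]
    have hfeas' : gSym S V j (Function.update (fun ℓ => Γ ℓ ω) j (lamMax j)) ω ≤ β j := by
      apply havg
      intro i
      refine le_trans ?_ (hfe i)
      simp only [lossFn]
      apply mul_le_mul_of_nonneg_left _ (h0 i)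
      by_cases hc : (∀ l, l < j → S i l ω ≤ Function.update (fun ℓ => Γ ℓ ω) j (lamMax j) l)
          ∧ Function.update (fun ℓ => Γ ℓ ω) j (lamMax j) j < S i j ω
      · have hc2 : (∀ l, l < j → S i l ω ≤ lamMax l) ∧ lamMax j < S i j ω := by
          constructor
          · intro l hl
            have h3 := hc.1 l hl
            simp only [Function.update_of_ne (ne_of_lt hl)] at h3
            exact le_trans h3 (hΓrange l hl ω).2
          · have h3 := hc.2
            rwa [Function.update_self] at h3
        rw [if_pos hc, if_pos hc2]
      · rw [if_neg hc]
        split <;> norm_num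
    have hbdd : BddAbove (insert (lamMin j)
        {x | x ∈ Icc (lamMin j) (lamMax j) ∧
          β j < gSym S V j (Function.update (fun ℓ => Γ ℓ ω) j x) ω}) := by
      refine ⟨lamMax j, ?_⟩
      rintro y hy
      simp only [Set.mem_insert_iff, mem_setOf_eq, mem_Icc] at hy
      rcases hy with rfl | ⟨⟨-, h2⟩, -⟩
      · exact hΛ j
      · exact h2
    have hUω : U ω = sSup (insert (lamMin j)
        {x | x ∈ Icc (lamMin j) (lamMax j) ∧
          β j < gSym S V j (Function.update (fun ℓ => Γ ℓ ω) j x) ω}) := rfl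
    have hU1 : lamMin j ≤ U ω := by
      rw [hUω]
      exact le_csSup hbdd (mem_insert _ _)
    have hU2 : U ω ≤ lamMax j := by
      rw [hUω]
      apply csSup_le (insert_nonempty _ _)
      rintro y hy
      simp only [Set.mem_insert_iff, mem_setOf_eq, mem_Icc] at hy
      rcases hy with rfl | ⟨⟨-, h2⟩, -⟩
      · exact hΛ j
      · exact h2
    show gSym S V j (Function.update (fun ℓ => Γ ℓ ω) j (U ω)) ω ≤ β j
    rcases eq_or_lt_of_le hU2 with hcase | hcase
    · rw [hcase]
      exact hfeas'
    · have hTne : (insert (lamMax j) ((Finset.univ.filter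
          (fun i : Fin (n + 1) => U ω < S i j ω)).image (fun i => S i j ω))).Nonempty :=
        ⟨lamMax j, Finset.mem_insert_self _ _⟩
      set mn := (insert (lamMax j) ((Finset.univ.filter
          (fun i : Fin (n + 1) => U ω < S i j ω)).image (fun i => S i j ω))).min' hTne with hmn
      have hUmn : U ω < mn := by
        rw [hmn, Finset.lt_min'_iff]
        intro y hy
        rw [Finset.mem_insert] at hy
        rcases hy with rfl | hy
        · exact hcase
        · obtain ⟨i, hi, rfl⟩ := Finset.mem_image.1 hy
          exact (Finset.mem_filter.1 hi).2
      set x := (U ω + mn) / 2 with hxdef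
      have hx1 : U ω < x := by rw [hxdef]; linarith
      have hx2 : x < mn := by rw [hxdef]; linarith
      have hmnmax : mn ≤ lamMax j := Finset.min'_le _ _ (Finset.mem_insert_self _ _)
      have hxmax : x ≤ lamMax j := le_trans hx2.le hmnmax
      have hxmin : lamMin j ≤ x := le_trans hU1 hx1.le
      have hgx : gSym S V j (Function.update (fun ℓ => Γ ℓ ω) j x) ω ≤ β j := by
        by_contra hgt
        have hmem : x ∈ insert (lamMin j)
            {x | x ∈ Icc (lamMin j) (lamMax j) ∧
              β j < gSym S V j (Function.update (fun ℓ => Γ ℓ ω) j x) ω} :=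
          mem_insert_of_mem _ ⟨mem_Icc.2 ⟨hxmin, hxmax⟩, not_le.1 hgt⟩
        have hle := le_csSup hbdd hmem
        rw [← hUω] at hle
        exact absurd hle (not_le.2 hx1)
      have hgeq : gSym S V j (Function.update (fun ℓ => Γ ℓ ω) j (U ω)) ω
          = gSym S V j (Function.update (fun ℓ => Γ ℓ ω) j x) ω := by
        simp only [gSym, lossFn]
        congr 1
        apply Finset.sum_congr rfl
        intro i _
        congr 1
        apply if_congr _ rfl rfl
        have hiff : (Function.update (fun ℓ => Γ ℓ ω) j (U ω) j < S i j ω)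
            ↔ (Function.update (fun ℓ => Γ ℓ ω) j x j < S i j ω) := by
          rw [Function.update_self, Function.update_self]
          constructor
          · intro h
            have hmem : S i j ω ∈ insert (lamMax j) ((Finset.univ.filter
                (fun i : Fin (n + 1) => U ω < S i j ω)).image (fun i => S i j ω)) :=
              Finset.mem_insert_of_mem
                (Finset.mem_image.2 ⟨i, Finset.mem_filter.2 ⟨Finset.mem_univ i, h⟩, rfl⟩)
            exact lt_of_lt_of_le hx2 (Finset.min'_le _ _ hmem)
          · intro h
            exact lt_trans hx1 h
        constructor
        · rintro ⟨h1, h2⟩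
          refine ⟨fun l hl => ?_, hiff.1 h2⟩
          have h3 := h1 l hl
          rwa [Function.update_of_ne (ne_of_lt hl)] at h3 ⊢
        · rintro ⟨h1, h2⟩
          refine ⟨fun l hl => ?_, hiff.2 h2⟩
          have h3 := h1 l hl
          rwa [Function.update_of_ne (ne_of_lt hl)] at h3 ⊢
      rw [hgeq]
      exact hgx
  -- measurability material
  have hFdmeas : Measurable (RiskAux.Fd lamMin lamMax φf j (β j)) :=
    RiskAux.measurable_Fd lamMin lamMax φf hφmeas j (β j)
  have hDmeas : Measurable (fun ω => fun i : Fin (n + 1) =>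
      ((fun l => S i l ω), (fun l => V i l ω)) : Ω → RiskAux.Dat m n) :=
    RiskAux.measurable_Dof S V hSmeas hVmeas
  have hTmeas : ∀ π : Equiv.Perm (Fin (n + 1)), Measurable (fun ω => fun i : Fin (n + 1) =>
      ((fun l => S (π i) l ω), (fun l => V (π i) l ω)) : Ω → RiskAux.Dat m n) := by
    intro π
    apply measurable_pi_lambda
    intro i
    exact Measurable.prod (measurable_pi_lambda _ fun l => hSmeas (π i) l)
      (measurable_pi_lambda _ fun l => hVmeas (π i) l)
  have hFdT : ∀ (π : Equiv.Perm (Fin (n + 1))) (ω : Ω), (∀ i : Fin (n + 1), 0 ≤ V i j ω) →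
      RiskAux.Fd lamMin lamMax φf j (β j) (fun i => RiskAux.Dof S V ω (π i))
        = lossFn S V j (π (Fin.last n)) (lamf ω) ω := by
    intro π ω h0
    have hinv : ∀ l, φf l (fun i => RiskAux.Dof S V ω (π i)) = φf l (RiskAux.Dof S V ω) :=
      fun l => hφinv l π (RiskAux.Dof S V ω)
    have hUdp : RiskAux.Ud lamMin lamMax φf j (β j) (fun i => RiskAux.Dof S V ω (π i))
        = U ω := by
      rw [RiskAux.Ud_comp_perm lamMin lamMax φf j (β j) π (RiskAux.Dof S V ω) hinv]
      exact hUd ω h0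
    simp only [RiskAux.Fd, hUdp, hinv]
    exact hterm ω h0 (U ω) (π (Fin.last n))
  have hmapid : ∫ d, RiskAux.Fd lamMin lamMax φf j (β j) d
        ∂(Measure.map (fun ω => fun i : Fin (n + 1) =>
          ((fun j => S i j ω), (fun j => V i j ω))) μ)
      = ∫ ω, RiskAux.Fd lamMin lamMax φf j (β j) (RiskAux.Dof S V ω) ∂μ := by
    rw [MeasureTheory.integral_map hDmeas.aemeasurable hFdmeas.aestronglyMeasurable]
    rfl
  have hmapπ : ∀ π : Equiv.Perm (Fin (n + 1)),
      ∫ d, RiskAux.Fd lamMin lamMax φf j (β j) d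
          ∂(Measure.map (fun ω => fun i : Fin (n + 1) =>
            ((fun j => S (π i) j ω), (fun j => V (π i) j ω))) μ)
        = ∫ ω, RiskAux.Fd lamMin lamMax φf j (β j) (fun i => RiskAux.Dof S V ω (π i)) ∂μ := by
    intro π
    rw [MeasureTheory.integral_map (hTmeas π).aemeasurable hFdmeas.aestronglyMeasurable]
    rfl
  -- integrability
  have hintg : ∀ i : Fin (n + 1), Integrable (fun ω => lossFn S V j i (lamf ω) ω) μ := by
    intro i
    have hm0 : Measurable (fun ω => RiskAux.Fd lamMin lamMax φf j (β j)
        (fun k => RiskAux.Dof S V ω (Equiv.swap i (Fin.last n) k))) :=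
      hFdmeas.comp (hTmeas (Equiv.swap i (Fin.last n)))
    have hsm : AEStronglyMeasurable (fun ω => lossFn S V j i (lamf ω) ω) μ := by
      apply hm0.aestronglyMeasurable.congr
      filter_upwards [hV0] with ω hω
      rw [hFdT (Equiv.swap i (Fin.last n)) ω (fun k => le_trans (hVmin0 j) (hω k).1),
        Equiv.swap_apply_right]
    apply MeasureTheory.Integrable.mono' (integrable_const (Vmax j)) hsm
    filter_upwards [hVbd i j] with ω hω
    simp only [lossFn, Real.norm_eq_abs, abs_mul]
    have h1 : |V i j ω| ≤ Vmax j := abs_le.2 ⟨by linarith [hω.1, hVmin0 j, hVle j], hω.2⟩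
    have h2 : |(if (∀ l, l < j → S i l ω ≤ lamf ω l) ∧ lamf ω j < S i j ω
        then (1 : ℝ) else 0)| ≤ 1 := by
      split <;> norm_num
    have h3 := mul_le_mul h1 h2 (abs_nonneg _) (le_trans (hVmin0 j) (hVle j))
    linarith
  -- key exchangeability identity
  have hkey : ∀ i : Fin (n + 1), ∫ ω, lossFn S V j i (lamf ω) ω ∂μ
      = ∫ ω, lossFn S V j (Fin.last n) (lamf ω) ω ∂μ := by
    intro i
    have e1 : ∫ ω, lossFn S V j i (lamf ω) ω ∂μ
        = ∫ ω, RiskAux.Fd lamMin lamMax φf j (β j)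
            (fun k => RiskAux.Dof S V ω (Equiv.swap i (Fin.last n) k)) ∂μ := by
      apply integral_congr_ae
      filter_upwards [hV0] with ω hω
      rw [hFdT (Equiv.swap i (Fin.last n)) ω (fun k => le_trans (hVmin0 j) (hω k).1),
        Equiv.swap_apply_right]
    have e2 : ∫ ω, lossFn S V j (Fin.last n) (lamf ω) ω ∂μ
        = ∫ ω, RiskAux.Fd lamMin lamMax φf j (β j) (RiskAux.Dof S V ω) ∂μ := by
      apply integral_congr_ae
      filter_upwards [hV0] with ω hω
      have h3 := hFdT 1 ω (fun k => le_trans (hVmin0 j) (hω k).1)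
      simp only [Equiv.Perm.coe_one, id_eq] at h3
      exact h3.symm
    rw [e1, e2, ← hmapπ (Equiv.swap i (Fin.last n)), hexch (Equiv.swap i (Fin.last n)), hmapid]
  -- conclude
  have hsum : ∫ ω, gSym S V j (lamf ω) ω ∂μ
      = ∫ ω, lossFn S V j (Fin.last n) (lamf ω) ω ∂μ := by
    have h1 : ∫ ω, gSym S V j (lamf ω) ω ∂μ
        = (1 / ((n : ℝ) + 1)) * ∑ i : Fin (n + 1), ∫ ω, lossFn S V j i (lamf ω) ω ∂μ := by
      simp only [gSym]
      rw [MeasureTheory.integral_const_mul]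
      congr 1
      exact MeasureTheory.integral_finset_sum _ (fun i _ => hintg i)
    rw [h1, Finset.sum_congr rfl (fun i _ => hkey i), Finset.sum_const, Finset.card_univ,
      Fintype.card_fin, nsmul_eq_mul]
    have hne : ((n : ℝ) + 1) ≠ 0 := by positivity
    push_cast
    rw [← mul_assoc, one_div_mul_cancel hne, one_mul]
  rw [← hsum]
  have hgint : Integrable (fun ω => gSym S V j (lamf ω) ω) μ := by
    have heq : (fun ω => gSym S V j (lamf ω) ω)
        = fun ω => (1 / ((n : ℝ) + 1)) * ∑ i : Fin (n + 1), lossFn S V j i (lamf ω) ω := rfl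
    rw [heq]
    exact (MeasureTheory.integrable_finset_sum _ (fun i _ => hintg i)).const_mul _
  have hmono : ∫ ω, gSym S V j (lamf ω) ω ∂μ ≤ ∫ _ω, β j ∂μ := by
    apply integral_mono_ae hgint (integrable_const _)
    filter_upwards [hV0, hFe] with ω h1 h2
    exact hrisk ω h1 h2
  refine le_trans hmono ?_
  simp



end
end

section
/- (Bounded jumps and risk lower bound at symmetric arguments.) Fix j ∈ {1,…,m} and β ≥ 0 such that for every i ∈ {1,…,n+1}, L_j^{(i)}(λ_1^min,…,λ_j^min) > β almost surely. Then for any symmetric functions Γ_1,…,Γ_{j−1} of the n+1 datapoints taking values in Λ_1,…,Λ_{j−1} respectively: almost surely g_j^sym(U_j^sym(Γ_1,…,Γ_{j−1}; β); Γ_1,…,Γ_{j−1}) ≥ β − Vmax_j/(n+1), and consequently E[L_j^{(n+1)}(Γ_1,…,Γ_{j−1}, U_j^sym(Γ_1,…,Γ_{j−1}; β))] ≥ β − Vmax_j/(n+1). -/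
open MeasureTheory Set

attribute [local instance] Classical.propDecidable

noncomputable section

-- data space
abbrev Dsp (m n : ℕ) := Fin (n + 1) → (Fin m → ℝ) × (Fin m → ℝ)

def lossD {m n : ℕ} (j : Fin m) (i : Fin (n + 1)) (lam : Fin m → ℝ) (d : Dsp m n) : ℝ :=
  (d i).2 j * (if (∀ l, l < j → (d i).1 l ≤ lam l) ∧ lam j < (d i).1 j then 1 else 0)

def gLoc {m n : ℕ} (j : Fin m) (lam : Fin m → ℝ) (d : Dsp m n) (x : ℝ) : ℝ :=
  (1 / ((n : ℝ) + 1)) * ∑ i : Fin (n + 1), lossD j i (Function.update lam j x) d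

def uLoc {m n : ℕ} (j : Fin m) (lam : Fin m → ℝ) (lmin lmax b : ℝ) (d : Dsp m n) : ℝ :=
  sSup (insert lmin {x | x ∈ Icc lmin lmax ∧ b < gLoc j lam d x})

lemma lossD_congr {m n : ℕ} (j : Fin m) (i : Fin (n + 1)) (d : Dsp m n)
    (lam lam' : Fin m → ℝ) (h1 : ∀ l, l < j → lam l = lam' l) (h2 : lam j = lam' j) :
    lossD j i lam d = lossD j i lam' d := by
  unfold lossD
  congr 1
  refine if_congr ?_ rfl rfl
  exact and_congr (forall_congr' fun l => imp_congr_right fun hl => by rw [h1 l hl])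
    (by rw [h2])

lemma lossD_update_congr {m n : ℕ} (j : Fin m) (i : Fin (n + 1)) (d : Dsp m n)
    (lam : Fin m → ℝ) (x y : ℝ) (h : x < (d i).1 j ↔ y < (d i).1 j) :
    lossD j i (Function.update lam j x) d = lossD j i (Function.update lam j y) d := by
  unfold lossD
  congr 1
  refine if_congr ?_ rfl rfl
  refine and_congr (forall_congr' fun l => imp_congr_right fun hl => ?_) ?_
  · rw [Function.update_of_ne (Fin.ne_of_lt hl), Function.update_of_ne (Fin.ne_of_lt hl)]
  · rw [Function.update_self, Function.update_self]; exact h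

lemma gLoc_update_congr {m n : ℕ} (j : Fin m) (lam : Fin m → ℝ) (d : Dsp m n) (x y : ℝ)
    (h : ∀ i : Fin (n + 1), (x < (d i).1 j ↔ y < (d i).1 j)) :
    gLoc j lam d x = gLoc j lam d y := by
  unfold gLoc
  congr 1
  exact Finset.sum_congr rfl fun i _ => lossD_update_congr j i d lam x y (h i)

lemma gLoc_congr_lam {m n : ℕ} (j : Fin m) (lam lam' : Fin m → ℝ) (d : Dsp m n) (x : ℝ)
    (h : ∀ l, l < j → lam l = lam' l) :
    gLoc j lam d x = gLoc j lam' d x := by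
  unfold gLoc
  congr 1
  refine Finset.sum_congr rfl fun i _ => lossD_congr j i d _ _ (fun l hl => ?_) ?_
  · rw [Function.update_of_ne (Fin.ne_of_lt hl), Function.update_of_ne (Fin.ne_of_lt hl)]
    exact h l hl
  · rw [Function.update_self, Function.update_self]

lemma uLoc_congr_lam {m n : ℕ} (j : Fin m) (lam lam' : Fin m → ℝ) (lmin lmax b : ℝ)
    (d : Dsp m n) (h : ∀ l, l < j → lam l = lam' l) :
    uLoc j lam lmin lmax b d = uLoc j lam' lmin lmax b d := by
  unfold uLoc
  congr 2
  ext x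
  simp only [Set.mem_setOf_eq, gLoc_congr_lam j lam lam' d x h]

lemma core_lemma {m n : ℕ} (j : Fin m) (d : Dsp m n) (lam lamMin lamMax : Fin m → ℝ)
    (b Vmx : ℝ) (hb : 0 ≤ b) (hΛ : lamMin j ≤ lamMax j)
    (hlam : ∀ l, l < j → lamMin l ≤ lam l)
    (hdist : ∀ i i' : Fin (n + 1), i ≠ i' → (d i).1 j ≠ (d i').1 j)
    (hV0 : ∀ i, 0 ≤ (d i).2 j) (hVmax : ∀ i, (d i).2 j ≤ Vmx)
    (hlow : ∀ i, b < lossD j i lamMin d) :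
    b - Vmx / ((n : ℝ) + 1) ≤ gLoc j lam d (uLoc j lam (lamMin j) (lamMax j) b d) := by
  have hnpos : (0 : ℝ) < (n : ℝ) + 1 := by positivity
  have hVmx0 : 0 ≤ Vmx := le_trans (hV0 0) (hVmax 0)
  set g : ℝ → ℝ := fun x => gLoc j lam d x with hg
  set A : Set ℝ := {x | x ∈ Icc (lamMin j) (lamMax j) ∧ b < g x} with hA
  have hind : ∀ i : Fin (n + 1),
      (∀ l, l < j → (d i).1 l ≤ lamMin l) ∧ lamMin j < (d i).1 j := by
    intro i
    by_contra hcon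
    have h := hlow i
    rw [lossD, if_neg hcon, mul_zero] at h
    exact absurd h (not_lt.2 hb)
  have hlossMin : ∀ i, lossD j i (Function.update lam j (lamMin j)) d = (d i).2 j := by
    intro i
    rw [lossD, if_pos, mul_one]
    refine ⟨fun l hl => ?_, ?_⟩
    · rw [Function.update_of_ne (Fin.ne_of_lt hl)]
      exact le_trans ((hind i).1 l hl) (hlam l hl)
    · rw [Function.update_self]; exact (hind i).2
  have hbV : ∀ i, b < (d i).2 j := by
    intro i
    have h := hlow i
    rwa [lossD, if_pos (hind i), mul_one] at h
  have hgMin : b < g (lamMin j) := by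
    have hsum : ((n : ℝ) + 1) * b
        < ∑ i : Fin (n + 1), lossD j i (Function.update lam j (lamMin j)) d := by
      have h1 : ((n : ℝ) + 1) * b = ∑ _i : Fin (n + 1), b := by
        simp [Finset.sum_const, Finset.card_univ, mul_comm]
      rw [h1]
      exact Finset.sum_lt_sum_of_nonempty Finset.univ_nonempty
        (fun i _ => by rw [hlossMin i]; exact hbV i)
    have h2 : b = (1 / ((n : ℝ) + 1)) * (((n : ℝ) + 1) * b) := by field_simp
    calc b = (1 / ((n : ℝ) + 1)) * (((n : ℝ) + 1) * b) := h2
      _ < (1 / ((n : ℝ) + 1)) * ∑ i : Fin (n + 1), lossD j i (Function.update lam j (lamMin j)) d :=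
          mul_lt_mul_of_pos_left hsum (by positivity)
      _ = g (lamMin j) := rfl
  have hAmin : lamMin j ∈ A := ⟨⟨le_refl _, hΛ⟩, hgMin⟩
  have hAne : A.Nonempty := ⟨_, hAmin⟩
  have hAbdd : BddAbove A := ⟨lamMax j, fun x hx => hx.1.2⟩
  have hU : uLoc j lam (lamMin j) (lamMax j) b d = sSup A := by
    rw [uLoc, Set.insert_eq_self.2 hAmin]
  rw [hU]
  set U := sSup A with hUdef
  have hUmin : lamMin j ≤ U := le_csSup hAbdd hAmin
  show b - Vmx / ((n : ℝ) + 1) ≤ g U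
  have hdivnn : 0 ≤ Vmx / ((n : ℝ) + 1) := div_nonneg hVmx0 hnpos.le
  by_cases hcase : b < g U
  · linarith
  · push_neg at hcase
    set F : Finset ℝ := insert (lamMin j - 1)
      ((Finset.univ.filter (fun i : Fin (n + 1) => (d i).1 j < U)).image
        (fun i => (d i).1 j)) with hF
    have hFne : F.Nonempty := ⟨_, Finset.mem_insert_self _ _⟩
    set c := F.max' hFne with hc
    have hcU : c < U := by
      rw [hc, Finset.max'_lt_iff]
      intro y hy
      rcases Finset.mem_insert.1 hy with h | h
      · rw [h]; linarith
      · rcases Finset.mem_image.1 h with ⟨i, hi, rfl⟩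
        exact (Finset.mem_filter.1 hi).2
    obtain ⟨x, hxA, hcx⟩ := exists_lt_of_lt_csSup hAne hcU
    have hxU : x ≤ U := le_csSup hAbdd hxA
    have hterm : ∀ i : Fin (n + 1),
        lossD j i (Function.update lam j x) d - lossD j i (Function.update lam j U) d
          ≤ (if (d i).1 j = U then Vmx else 0) := by
      intro i
      by_cases hSU : (d i).1 j = U
      · rw [if_pos hSU]
        have h1 : lossD j i (Function.update lam j x) d ≤ (d i).2 j := by
          rw [lossD]; split
          · rw [mul_one]
          · rw [mul_zero]; exact hV0 i
        have h2 : 0 ≤ lossD j i (Function.update lam j U) d := by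
          rw [lossD]; split
          · rw [mul_one]; exact hV0 i
          · rw [mul_zero]
        linarith [hVmax i]
      · rw [if_neg hSU]
        have heq : lossD j i (Function.update lam j x) d
            = lossD j i (Function.update lam j U) d := by
          refine lossD_update_congr j i d lam x U ?_
          constructor
          · intro hx
            rcases lt_or_ge U ((d i).1 j) with h | h
            · exact h
            · exfalso
              have hSltU : (d i).1 j < U := lt_of_le_of_ne h hSU
              have hmem : (d i).1 j ∈ F := Finset.mem_insert_of_mem
                (Finset.mem_image_of_mem _
                  (Finset.mem_filter.2 ⟨Finset.mem_univ i, hSltU⟩))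
              have := Finset.le_max' F _ hmem
              rw [← hc] at this
              linarith
          · intro h; exact lt_of_le_of_lt hxU h
        linarith [heq.le, heq.ge]
    have hsumb : ∑ i : Fin (n + 1), (if (d i).1 j = U then Vmx else 0) ≤ Vmx := by
      by_cases hex : ∃ i0 : Fin (n + 1), (d i0).1 j = U
      · obtain ⟨i0, hi0⟩ := hex
        have key : ∀ i ∈ Finset.univ, i ≠ i0 → (if (d i).1 j = U then Vmx else (0:ℝ)) = 0 := by
          intro i _ hne
          exact if_neg (fun h : (d i).1 j = U => hdist i i0 hne (h.trans hi0.symm))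
        rw [Finset.sum_eq_single i0 key (fun h => absurd (Finset.mem_univ i0) h), if_pos hi0]
      · have : ∀ i ∈ Finset.univ, (if (d i).1 j = U then Vmx else (0:ℝ)) = 0 :=
          fun i _ => if_neg (fun h => hex ⟨i, h⟩)
        rw [Finset.sum_congr rfl this, Finset.sum_const, smul_zero]
        exact hVmx0
    have hsum : ∑ i : Fin (n + 1), lossD j i (Function.update lam j x) d
        - ∑ i : Fin (n + 1), lossD j i (Function.update lam j U) d ≤ Vmx := by
      rw [← Finset.sum_sub_distrib]
      exact le_trans (Finset.sum_le_sum fun i _ => hterm i) hsumb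
    have hgx : b < g x := hxA.2
    have hgdiff : g x - g U ≤ Vmx / ((n : ℝ) + 1) := by
      have : g x - g U = (1 / ((n : ℝ) + 1))
          * (∑ i : Fin (n + 1), lossD j i (Function.update lam j x) d
            - ∑ i : Fin (n + 1), lossD j i (Function.update lam j U) d) := by
        show gLoc j lam d x - gLoc j lam d U = _
        rw [gLoc, gLoc]; ring
      rw [this]
      calc (1 / ((n : ℝ) + 1)) * (∑ i : Fin (n + 1), lossD j i (Function.update lam j x) d
            - ∑ i : Fin (n + 1), lossD j i (Function.update lam j U) d)
          ≤ (1 / ((n : ℝ) + 1)) * Vmx := mul_le_mul_of_nonneg_left hsum (by positivity)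
        _ = Vmx / ((n : ℝ) + 1) := by ring
    linarith

lemma measurable_lossD_comp {m n : ℕ} (j : Fin m) (i : Fin (n + 1))
    (L : Dsp m n → Fin m → ℝ) (hL : ∀ l, Measurable fun d => L d l) :
    Measurable fun d => lossD j i (L d) d := by
  unfold lossD
  have hm1 : Measurable fun d : Dsp m n => (d i).2 j :=
    (measurable_pi_apply j).comp ((measurable_pi_apply i).snd)
  have hm2 : Measurable fun d : Dsp m n => (d i).1 j :=
    (measurable_pi_apply j).comp ((measurable_pi_apply i).fst)
  apply hm1.mul
  have h1 : MeasurableSet {d : Dsp m n | ∀ l, l < j → (d i).1 l ≤ L d l} := by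
    have heq : {d : Dsp m n | ∀ l, l < j → (d i).1 l ≤ L d l}
        = ⋂ l, {d : Dsp m n | l < j → (d i).1 l ≤ L d l} := by
      ext d; simp [Set.mem_iInter]
    rw [heq]
    apply MeasurableSet.iInter
    intro l
    by_cases hl : l < j
    · simp only [hl, true_implies]
      exact measurableSet_le ((measurable_pi_apply l).comp ((measurable_pi_apply i).fst)) (hL l)
    · simp [hl]
  have h2 : MeasurableSet {d : Dsp m n | L d j < (d i).1 j} := measurableSet_lt (hL j) hm2
  have h3 : MeasurableSet {d : Dsp m n |
      (∀ l, l < j → (d i).1 l ≤ L d l) ∧ L d j < (d i).1 j} := by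
    rw [Set.setOf_and]; exact h1.inter h2
  exact Measurable.ite h3 measurable_const measurable_const

lemma measurable_update_comp {m n : ℕ} (j : Fin m) (lamF : Dsp m n → Fin m → ℝ)
    (hlamF : ∀ l, Measurable fun d => lamF d l) (xF : Dsp m n → ℝ) (hxF : Measurable xF) :
    ∀ l, Measurable fun d => Function.update (lamF d) j (xF d) l := by
  intro l
  by_cases hl : l = j
  · subst hl; simpa only [Function.update_self] using hxF
  · simpa only [Function.update_of_ne hl] using hlamF l

lemma measurable_gLoc_comp {m n : ℕ} (j : Fin m) (lamF : Dsp m n → Fin m → ℝ)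
    (hlamF : ∀ l, Measurable fun d => lamF d l) (x : ℝ) :
    Measurable fun d => gLoc j (lamF d) d x := by
  unfold gLoc
  apply Measurable.const_mul
  apply Finset.measurable_sum
  intro i _
  exact measurable_lossD_comp j i _
    (measurable_update_comp j lamF hlamF (fun _ => x) measurable_const)

lemma measurable_uLoc_comp {m n : ℕ} (j : Fin m) (lamF : Dsp m n → Fin m → ℝ)
    (hlamF : ∀ l, Measurable fun d => lamF d l) (lmin lmax b : ℝ) :
    Measurable fun d => uLoc j (lamF d) lmin lmax b d := by
  apply measurable_of_Ioi
  intro t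
  have hbdd : ∀ d : Dsp m n, BddAbove
      (insert lmin {x | x ∈ Icc lmin lmax ∧ b < gLoc j (lamF d) d x}) := by
    intro d
    refine ⟨max lmin lmax, ?_⟩
    rintro y (rfl | hy)
    · exact le_max_left _ _
    · exact le_trans hy.1.2 (le_max_right _ _)
  have hset : (fun d => uLoc j (lamF d) lmin lmax b d) ⁻¹' Ioi t =
      {d : Dsp m n | t < lmin}
      ∪ {d : Dsp m n | t < lmax ∧ lmin ≤ lmax ∧ b < gLoc j (lamF d) d lmax}
      ∪ ⋃ q : ℚ, {d : Dsp m n |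
          (t < (q : ℝ) ∧ (q : ℝ) ∈ Icc lmin lmax) ∧ b < gLoc j (lamF d) d q} := by
    ext d
    simp only [Set.mem_preimage, Set.mem_Ioi, Set.mem_union, Set.mem_iUnion,
      Set.mem_setOf_eq]
    constructor
    · intro ht
      rw [uLoc] at ht
      obtain ⟨x, hx, htx⟩ := exists_lt_of_lt_csSup ⟨lmin, Set.mem_insert _ _⟩ ht
      rcases hx with rfl | hxA
      · exact Or.inl (Or.inl htx)
      · rcases eq_or_lt_of_le hxA.1.2 with rfl | hxlt
        · exact Or.inl (Or.inr ⟨htx, hxA.1.1, hxA.2⟩)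
        · -- x < lmax : find rational q just above x with same indicator pattern
          right
          set T : Finset ℝ := (Finset.univ.filter
            (fun i : Fin (n + 1) => x < (d i).1 j)).image (fun i => (d i).1 j) with hT
          have hq : ∃ q : ℚ, x < (q : ℝ) ∧ (q : ℝ) < lmax ∧
              ∀ i : Fin (n + 1), ((q : ℝ) < (d i).1 j ↔ x < (d i).1 j) := by
            by_cases hTne : T.Nonempty
            · have hxm : x < min (T.min' hTne) lmax := by
                refine lt_min ?_ hxlt
                rw [Finset.lt_min'_iff]
                intro y hy
                rcases Finset.mem_image.1 hy with ⟨i, hi, rfl⟩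
                exact (Finset.mem_filter.1 hi).2
              obtain ⟨q, hq1, hq2⟩ := exists_rat_btwn hxm
              refine ⟨q, hq1, lt_of_lt_of_le hq2 (min_le_right _ _), fun i => ?_⟩
              constructor
              · intro h; exact lt_trans hq1 h
              · intro h
                have hmem : (d i).1 j ∈ T := Finset.mem_image_of_mem _
                  (Finset.mem_filter.2 ⟨Finset.mem_univ i, h⟩)
                exact lt_of_lt_of_le (lt_of_lt_of_le hq2 (min_le_left _ _))
                  (Finset.min'_le T _ hmem)
            · have hno : ∀ i : Fin (n + 1), ¬ x < (d i).1 j := by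
                intro i hx'
                exact hTne ⟨_, Finset.mem_image_of_mem _
                  (Finset.mem_filter.2 ⟨Finset.mem_univ i, hx'⟩)⟩
              obtain ⟨q, hq1, hq2⟩ := exists_rat_btwn hxlt
              exact ⟨q, hq1, hq2, fun i =>
                iff_of_false (fun h => hno i (lt_trans hq1 h)) (hno i)⟩
          obtain ⟨q, hq1, hq2, hq3⟩ := hq
          refine ⟨q, ⟨lt_trans htx hq1, ⟨le_trans hxA.1.1 hq1.le, hq2.le⟩⟩, ?_⟩
          rw [gLoc_update_congr j (lamF d) d q x hq3]
          exact hxA.2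
    · rintro ((h | ⟨h1, h2, h3⟩) | ⟨q, ⟨hq1, hq2⟩, hq3⟩)
      · exact lt_of_lt_of_le h (le_csSup (hbdd d) (Set.mem_insert _ _))
      · exact lt_of_lt_of_le h1 (le_csSup (hbdd d)
          (Set.mem_insert_of_mem _ ⟨⟨h2, le_refl _⟩, h3⟩))
      · exact lt_of_lt_of_le hq1 (le_csSup (hbdd d)
          (Set.mem_insert_of_mem _ ⟨hq2, hq3⟩))
  rw [hset]
  apply MeasurableSet.union
  · apply MeasurableSet.union
    · exact MeasurableSet.const _
    · rw [show {d : Dsp m n | t < lmax ∧ lmin ≤ lmax ∧ b < gLoc j (lamF d) d lmax}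
          = {d : Dsp m n | t < lmax ∧ lmin ≤ lmax} ∩ {d | b < gLoc j (lamF d) d lmax} by
          ext d; simp [and_assoc]]
      exact (MeasurableSet.const _).inter
        (measurableSet_lt measurable_const (measurable_gLoc_comp j lamF hlamF lmax))
  · apply MeasurableSet.iUnion
    intro q
    rw [Set.setOf_and]
    exact (MeasurableSet.const _).inter
      (measurableSet_lt measurable_const (measurable_gLoc_comp j lamF hlamF q))

lemma gLoc_perm {m n : ℕ} (j : Fin m) (lam : Fin m → ℝ) (d : Dsp m n)
    (π : Equiv.Perm (Fin (n + 1))) (x : ℝ) :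
    gLoc j lam (fun k => d (π k)) x = gLoc j lam d x := by
  unfold gLoc
  congr 1
  exact Equiv.sum_comp π (fun i => lossD j i (Function.update lam j x) d)

lemma uLoc_perm {m n : ℕ} (j : Fin m) (lam : Fin m → ℝ) (lmin lmax b : ℝ) (d : Dsp m n)
    (π : Equiv.Perm (Fin (n + 1))) :
    uLoc j lam lmin lmax b (fun k => d (π k)) = uLoc j lam lmin lmax b d := by
  unfold uLoc
  congr 2
  ext x
  simp only [Set.mem_setOf_eq, gLoc_perm j lam d π x]

/-- Lemma: bounded jumps and risk lower bound at symmetric arguments.  Fix `j`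
and `β ≥ 0` with `L_j^{(i)}(λ^min) > β` a.s. for all `i`.  Then for symmetric `Λ_ℓ`-valued
functions `Γ_1,…,Γ_{j−1}` of the `n+1` datapoints: almost surely
`g_j^sym(U_j^sym(Γ_{1:(j−1)}; β); Γ_{1:(j−1)}) ≥ β − Vmax_j/(n+1)`, and consequently
`E[L_j^{(n+1)}(Γ_{1:(j−1)}, U_j^sym(Γ_{1:(j−1)}; β))] ≥ β − Vmax_j/(n+1)`. -/
theorem bounded_jumps_risk_lower_bound
    {Ω : Type*} [MeasurableSpace Ω] (μ : Measure Ω) [IsProbabilityMeasure μ]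
    (m n : ℕ) (hm : 1 ≤ m) (hn : 1 ≤ n)
    (S V : Fin (n + 1) → Fin m → Ω → ℝ)
    (hSmeas : ∀ i j, Measurable (S i j)) (hVmeas : ∀ i j, Measurable (V i j))
    (lamMin lamMax : Fin m → ℝ) (hΛ : ∀ j, lamMin j ≤ lamMax j)
    (β : Fin m → ℝ) (hβ : ∀ j, 0 ≤ β j)
    (Vmin Vmax : Fin m → ℝ) (hVmin0 : ∀ j, 0 ≤ Vmin j) (hVle : ∀ j, Vmin j ≤ Vmax j)
    (hVbd : ∀ i j, ∀ᵐ ω ∂μ, V i j ω ∈ Icc (Vmin j) (Vmax j))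
    (hexch : ∀ π : Equiv.Perm (Fin (n + 1)),
      Measure.map (fun ω => fun i : Fin (n + 1) =>
          ((fun j => S (π i) j ω), (fun j => V (π i) j ω))) μ
        = Measure.map (fun ω => fun i : Fin (n + 1) =>
          ((fun j => S i j ω), (fun j => V i j ω))) μ)
    (hfeas : ∀ (j : Fin m) (i : Fin (n + 1)), ∀ᵐ ω ∂μ, lossFn S V j i lamMax ω ≤ β j)
    -- distinct continuous scores
    (hdist : ∀ j : Fin m, ∀ᵐ ω ∂μ,
      ∀ i i' : Fin (n + 1), i ≠ i' → S i j ω ≠ S i' j ω)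
    (j : Fin m) (b : ℝ) (hb : 0 ≤ b)
    (hlow : ∀ i : Fin (n + 1), ∀ᵐ ω ∂μ, b < lossFn S V j i lamMin ω)
    (Γ : Fin m → Ω → ℝ)
    (hΓsym : ∀ ℓ : Fin m, ℓ < j →
      ∃ φ : (Fin (n + 1) → (Fin m → ℝ) × (Fin m → ℝ)) → ℝ, Measurable φ ∧
        (∀ (π : Equiv.Perm (Fin (n + 1))) (d : Fin (n + 1) → (Fin m → ℝ) × (Fin m → ℝ)),
          φ (fun i => d (π i)) = φ d) ∧
        (∀ ω, Γ ℓ ω = φ (fun i => ((fun l => S i l ω), (fun l => V i l ω)))))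
    (hΓrange : ∀ ℓ : Fin m, ℓ < j → ∀ ω, Γ ℓ ω ∈ Icc (lamMin ℓ) (lamMax ℓ)) :
    (∀ᵐ ω ∂μ,
      b - Vmax j / ((n : ℝ) + 1)
        ≤ gSym S V j
            (Function.update (fun ℓ => Γ ℓ ω) j
              (USym S V lamMin lamMax j (fun ℓ => Γ ℓ ω) b ω)) ω) ∧
    b - Vmax j / ((n : ℝ) + 1)
      ≤ ∫ ω, lossFn S V j (Fin.last n)
          (Function.update (fun ℓ => Γ ℓ ω) j
            (USym S V lamMin lamMax j (fun ℓ => Γ ℓ ω) b ω)) ω ∂μ := by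
  classical
  set D : Ω → Dsp m n := fun ω i => ((fun l => S i l ω), (fun l => V i l ω)) with hD
  have hDmeas : Measurable D :=
    measurable_pi_lambda _ (fun i => Measurable.prod
      (measurable_pi_lambda _ fun l => hSmeas i l)
      (measurable_pi_lambda _ fun l => hVmeas i l))
  have hφ : ∀ ℓ : Fin m, ∃ φℓ : Dsp m n → ℝ, Measurable φℓ ∧
      (∀ (π : Equiv.Perm (Fin (n + 1))) (d : Dsp m n), φℓ (fun i => d (π i)) = φℓ d) ∧
      (ℓ < j → ∀ ω, Γ ℓ ω = φℓ (D ω)) := by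
    intro ℓ
    by_cases hl : ℓ < j
    · obtain ⟨φℓ, h1, h2, h3⟩ := hΓsym ℓ hl
      exact ⟨φℓ, h1, h2, fun _ ω => h3 ω⟩
    · exact ⟨fun _ => 0, measurable_const, fun _ _ => rfl, fun h => absurd h hl⟩
  choose φ hφmeas hφperm hφΓ using hφ
  set lamF : Dsp m n → Fin m → ℝ := fun d ℓ => φ ℓ d with hlamFdef
  set uF : Dsp m n → ℝ := fun d => uLoc j (lamF d) (lamMin j) (lamMax j) b d with huF
  set Φ : Fin (n + 1) → Dsp m n → ℝ :=
    fun i d => lossD j i (Function.update (lamF d) j (uF d)) d with hΦdef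
  -- a.e. lower bound on the symmetric risk
  have haegoal : ∀ᵐ ω ∂μ,
      b - Vmax j / ((n : ℝ) + 1)
        ≤ gSym S V j (Function.update (fun ℓ => Γ ℓ ω) j
            (USym S V lamMin lamMax j (fun ℓ => Γ ℓ ω) b ω)) ω := by
    have hV : ∀ᵐ ω ∂μ, ∀ i : Fin (n + 1), V i j ω ∈ Icc (Vmin j) (Vmax j) :=
      ae_all_iff.2 (fun i => hVbd i j)
    have hl : ∀ᵐ ω ∂μ, ∀ i : Fin (n + 1), b < lossFn S V j i lamMin ω :=
      ae_all_iff.2 hlow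
    filter_upwards [hdist j, hV, hl] with ω h1 h2 h3
    exact core_lemma j (D ω) (fun ℓ => Γ ℓ ω) lamMin lamMax b (Vmax j) hb (hΛ j)
      (fun l hl' => (hΓrange l hl' ω).1) (fun i i' hne => h1 i i' hne)
      (fun i => le_trans (hVmin0 j) (h2 i).1) (fun i => (h2 i).2) (fun i => h3 i)
  -- identification of the loss with a measurable function of the data
  have hHid : ∀ (i : Fin (n + 1)) (ω : Ω),
      lossFn S V j i (Function.update (fun ℓ => Γ ℓ ω) j
        (USym S V lamMin lamMax j (fun ℓ => Γ ℓ ω) b ω)) ω = Φ i (D ω) := by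
    intro i ω
    have hUeq : USym S V lamMin lamMax j (fun ℓ => Γ ℓ ω) b ω = uF (D ω) := by
      have h1 : USym S V lamMin lamMax j (fun ℓ => Γ ℓ ω) b ω
          = uLoc j (fun ℓ => Γ ℓ ω) (lamMin j) (lamMax j) b (D ω) := rfl
      rw [h1]
      exact uLoc_congr_lam j _ _ _ _ _ _ (fun l hl => hφΓ l hl ω)
    show lossD j i (Function.update (fun ℓ => Γ ℓ ω) j
        (USym S V lamMin lamMax j (fun ℓ => Γ ℓ ω) b ω)) (D ω)
      = lossD j i (Function.update (lamF (D ω)) j (uF (D ω))) (D ω)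
    refine lossD_congr j i (D ω) _ _ (fun l hl => ?_) ?_
    · rw [Function.update_of_ne (Fin.ne_of_lt hl), Function.update_of_ne (Fin.ne_of_lt hl)]
      exact hφΓ l hl ω
    · rw [Function.update_self, Function.update_self]
      exact hUeq
  -- measurability of Φ
  have hΦmeas : ∀ i, Measurable (Φ i) := by
    intro i
    exact measurable_lossD_comp j i _
      (measurable_update_comp j lamF (fun l => hφmeas l) uF
        (measurable_uLoc_comp j lamF (fun l => hφmeas l) _ _ _))
  -- permutation equivariance of Φ
  have hΦperm : ∀ (π : Equiv.Perm (Fin (n + 1))) (i : Fin (n + 1)) (d : Dsp m n),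
      Φ i (fun k => d (π k)) = Φ (π i) d := by
    intro π i d
    have hlamp : lamF (fun k => d (π k)) = lamF d := funext fun l => hφperm l π d
    have hup : uF (fun k => d (π k)) = uF d := by
      show uLoc j (lamF (fun k => d (π k))) (lamMin j) (lamMax j) b (fun k => d (π k))
        = uLoc j (lamF d) (lamMin j) (lamMax j) b d
      rw [hlamp]
      exact uLoc_perm j (lamF d) (lamMin j) (lamMax j) b d π
    show lossD j i (Function.update (lamF (fun k => d (π k))) j
        (uF (fun k => d (π k)))) (fun k => d (π k))
      = lossD j (π i) (Function.update (lamF d) j (uF d)) d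
    rw [hlamp, hup]
    rfl
  -- integrability
  have hbound : ∀ i : Fin (n + 1), ∀ᵐ ω ∂μ, ‖Φ i (D ω)‖ ≤ Vmax j := by
    intro i
    filter_upwards [hVbd i j] with ω hV
    rw [Real.norm_eq_abs]
    show |lossD j i (Function.update (lamF (D ω)) j (uF (D ω))) (D ω)| ≤ Vmax j
    have hVd : (D ω i).2 j = V i j ω := rfl
    rw [lossD, hVd]
    split
    · rw [mul_one, abs_of_nonneg (le_trans (hVmin0 j) hV.1)]; exact hV.2
    · rw [mul_zero, abs_zero]
      exact le_trans (hVmin0 j) (le_trans hV.1 hV.2)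
  have hint : ∀ i, Integrable (fun ω => Φ i (D ω)) μ := fun i =>
    Integrable.mono' (integrable_const (Vmax j))
      ((hΦmeas i).comp hDmeas).aestronglyMeasurable (hbound i)
  -- exchangeability: all datapoints have the same expected loss
  have hIeq : ∀ i : Fin (n + 1), ∫ ω, Φ i (D ω) ∂μ = ∫ ω, Φ (Fin.last n) (D ω) ∂μ := by
    intro i
    set π := Equiv.swap i (Fin.last n) with hπ
    have hmeasπ : Measurable (fun ω => fun k : Fin (n + 1) =>
        ((fun l => S (π k) l ω), (fun l => V (π k) l ω))) :=
      measurable_pi_lambda _ (fun k => Measurable.prod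
        (measurable_pi_lambda _ fun l => hSmeas (π k) l)
        (measurable_pi_lambda _ fun l => hVmeas (π k) l))
    have e1 : ∫ ω, Φ i (D ω) ∂μ = ∫ d, Φ i d ∂(Measure.map D μ) :=
      (integral_map hDmeas.aemeasurable (hΦmeas i).aestronglyMeasurable).symm
    rw [e1, hD, ← hexch π,
      integral_map hmeasπ.aemeasurable (hΦmeas i).aestronglyMeasurable]
    refine integral_congr_ae (Filter.Eventually.of_forall fun ω => ?_)
    have h := hΦperm π i (D ω)
    rw [Equiv.swap_apply_left] at h
    exact h
  constructor
  · exact haegoal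
  · have hgid2 : ∀ ω, gSym S V j (Function.update (fun ℓ => Γ ℓ ω) j
        (USym S V lamMin lamMax j (fun ℓ => Γ ℓ ω) b ω)) ω
        = (1 / ((n : ℝ) + 1)) * ∑ i : Fin (n + 1), Φ i (D ω) := by
      intro ω
      rw [gSym]
      congr 1
      exact Finset.sum_congr rfl fun i _ => hHid i ω
    have hgint : Integrable (fun ω => (1 / ((n : ℝ) + 1)) * ∑ i : Fin (n + 1), Φ i (D ω)) μ :=
      (integrable_finset_sum _ (fun i _ => hint i)).const_mul _
    have haegoal' : ∀ᵐ ω ∂μ, b - Vmax j / ((n : ℝ) + 1)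
        ≤ (1 / ((n : ℝ) + 1)) * ∑ i : Fin (n + 1), Φ i (D ω) :=
      haegoal.mono fun ω h => by rw [← hgid2 ω]; exact h
    have h1 : b - Vmax j / ((n : ℝ) + 1)
        ≤ ∫ ω, (1 / ((n : ℝ) + 1)) * ∑ i : Fin (n + 1), Φ i (D ω) ∂μ := by
      have h := integral_mono_ae (integrable_const (b - Vmax j / ((n : ℝ) + 1))) hgint haegoal'
      simpa using h
    have h2 : ∫ ω, (1 / ((n : ℝ) + 1)) * ∑ i : Fin (n + 1), Φ i (D ω) ∂μ
        = ∫ ω, Φ (Fin.last n) (D ω) ∂μ := by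
      rw [integral_const_mul, integral_finset_sum _ (fun i _ => hint i),
        Finset.sum_congr rfl (fun i _ => hIeq i), Finset.sum_const, Finset.card_univ,
        Fintype.card_fin, nsmul_eq_mul]
      have hc : ((n + 1 : ℕ) : ℝ) = (n : ℝ) + 1 := by push_cast; ring
      rw [hc]
      have hnz : ((n : ℝ) + 1) ≠ 0 := by positivity
      field_simp
    have h3 : ∫ ω, lossFn S V j (Fin.last n)
        (Function.update (fun ℓ => Γ ℓ ω) j
          (USym S V lamMin lamMax j (fun ℓ => Γ ℓ ω) b ω)) ω ∂μ
        = ∫ ω, Φ (Fin.last n) (D ω) ∂μ :=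
      integral_congr_ae (Filter.Eventually.of_forall fun ω => hHid (Fin.last n) ω)
    rw [h3]
    calc b - Vmax j / ((n : ℝ) + 1)
        ≤ ∫ ω, (1 / ((n : ℝ) + 1)) * ∑ i : Fin (n + 1), Φ i (D ω) ∂μ := h1
      _ = ∫ ω, Φ (Fin.last n) (D ω) ∂μ := h2
end
end

section
/- (Counting scores between two symmetric generalized-inverse levels.) Fix ℓ ∈ {1,…,m} and real numbers β ≥ β' ≥ 0 such that for every i ∈ {1,…,n+1}, L_ℓ^{(i)}(λ_1^min,…,λ_ℓ^min) > β almost surely and L_ℓ^{(i)}(λ_1^max,…,λ_ℓ^max) ≤ β' almost surely. Then for any λ_{1:(ℓ−1)} ∈ Λ_1×…×Λ_{ℓ−1}, almost surely the number of indices i ∈ {1,…,n+1} with S_1^{(i)} ≤ λ_1, …, S_{ℓ−1}^{(i)} ≤ λ_{ℓ−1} and S_ℓ^{(i)} ∈ ( U_ℓ^sym(λ_{1:(ℓ−1)}; β), U_ℓ^sym(λ_{1:(ℓ−1)}; β') ] is at most (β − β' + Vmax_ℓ/(n+1)) / (Vmin_ℓ/(n+1)). -/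
open MeasureTheory Set

attribute [local instance] Classical.propDecidable

noncomputable section

set_option maxHeartbeats 1000000 in
/-- Purely deterministic key lemma: counting scores between two generalized-inverse levels. -/
lemma key_count {ι : Type*} [Fintype ι] (P : ι → Prop) (s v : ι → ℝ)
    (vmin vmax : ℝ) (hvmin : 0 < vmin) (hvv : vmin ≤ vmax)
    (hv : ∀ i, v i ∈ Icc vmin vmax)
    (hs : ∀ i i', i ≠ i' → s i ≠ s i')
    (Nr : ℝ) (hNr : 0 < Nr)
    (lmin lmax b b' : ℝ) (hbb : b' ≤ b)
    (G : ℝ → ℝ)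
    (hG : ∀ x, G x = (1 / Nr) * ∑ i, v i * (if P i ∧ x < s i then 1 else 0)) :
    (({i : ι | P i ∧ s i ∈ Ioc (sSup (insert lmin {x | x ∈ Icc lmin lmax ∧ b < G x}))
        (sSup (insert lmin {x | x ∈ Icc lmin lmax ∧ b' < G x}))}.ncard : ℝ))
      ≤ (b - b' + vmax / Nr) / (vmin / Nr) := by
  classical
  have hvmax : 0 < vmax := lt_of_lt_of_le hvmin hvv
  set U := sSup (insert lmin {x | x ∈ Icc lmin lmax ∧ b < G x}) with hU
  set U' := sSup (insert lmin {x | x ∈ Icc lmin lmax ∧ b' < G x}) with hU'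
  have hmono : ∀ ⦃x y : ℝ⦄, x ≤ y → G y ≤ G x := by
    intro x y hxy
    rw [hG, hG]
    apply mul_le_mul_of_nonneg_left _ (by positivity)
    apply Finset.sum_le_sum
    intro i _
    by_cases h : P i ∧ y < s i
    · rw [if_pos h, if_pos ⟨h.1, lt_of_le_of_lt hxy h.2⟩]
    · rw [if_neg h]
      have h1 := (hv i).1
      split_ifs <;> nlinarith
  have hbdd : ∀ c : ℝ, BddAbove (insert lmin {x | x ∈ Icc lmin lmax ∧ c < G x}) := by
    intro c
    refine ⟨max lmin lmax, ?_⟩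
    rintro x (rfl | ⟨⟨h1, h2⟩, -⟩)
    · exact le_max_left _ _
    · exact le_max_of_le_right h2
  have hUlm : lmin ≤ U := le_csSup (hbdd b) (Set.mem_insert _ _)
  rcases Set.eq_empty_or_nonempty {i : ι | P i ∧ s i ∈ Ioc U U'} with hE | ⟨i1, hi1⟩
  · rw [hE]
    simp only [Set.ncard_empty, Nat.cast_zero]
    have h1 : 0 ≤ b - b' + vmax / Nr := by
      have : 0 < vmax / Nr := by positivity
      linarith
    have h2 : 0 < vmin / Nr := by positivity
    exact div_nonneg h1 h2.le
  · have hi1' : P i1 ∧ s i1 ∈ Ioc U U' := hi1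
    set F : Finset ι := Finset.univ.filter (fun i => P i ∧ s i ∈ Ioc U U') with hF
    have hmemF : ∀ i, i ∈ F ↔ (P i ∧ s i ∈ Ioc U U') := by
      intro i; simp [hF]
    have hFne : F.Nonempty := ⟨i1, (hmemF i1).2 hi1'⟩
    obtain ⟨i0, hi0F, hi0min⟩ := F.exists_min_image s hFne
    have hi0 := (hmemF i0).1 hi0F
    have hset' : {x | x ∈ Icc lmin lmax ∧ b' < G x}.Nonempty := by
      by_contra h
      rw [Set.not_nonempty_iff_eq_empty] at h
      have hUe : U' = lmin := by
        rw [hU', h]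
        simp
      have h1 : U < s i0 := hi0.2.1
      have h2 : s i0 ≤ U' := hi0.2.2
      rw [hUe] at h2
      linarith
    obtain ⟨y0, hy0⟩ := hset'
    have hlml : lmin ≤ lmax := le_trans hy0.1.1 hy0.1.2
    have hU'max : U' ≤ lmax := by
      apply csSup_le (Set.insert_nonempty _ _)
      rintro x (rfl | ⟨⟨h1, h2⟩, -⟩)
      · exact hlml
      · exact h2
    have hbelow : ∀ y, lmin ≤ y → y < U' → b' < G y := by
      intro y h1 h2
      obtain ⟨z, hz, hyz⟩ := exists_lt_of_lt_csSup (Set.insert_nonempty _ _) h2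
      rcases hz with rfl | ⟨-, hz2⟩
      · linarith
      · exact lt_of_lt_of_le hz2 (hmono hyz.le)
    set x0 := (U + s i0) / 2 with hx0
    have hUsi0 : U < s i0 := hi0.2.1
    have hUx0 : U < x0 := by rw [hx0]; linarith
    have hx0s : x0 < s i0 := by rw [hx0]; linarith
    have hx0U' : x0 < U' := lt_of_lt_of_le hx0s hi0.2.2
    have hGx0 : G x0 ≤ b := by
      by_contra h
      push_neg at h
      have hx0mem : x0 ∈ insert lmin {x | x ∈ Icc lmin lmax ∧ b < G x} :=
        Set.mem_insert_of_mem _ ⟨⟨le_trans hUlm hUx0.le, le_trans hx0U'.le hU'max⟩, h⟩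
      exact absurd (le_csSup (hbdd b) hx0mem) (not_le.2 hUx0)
    have hne : (Finset.univ : Finset ι).Nonempty := ⟨i0, Finset.mem_univ i0⟩
    set M := max lmin (Finset.univ.sup' hne (fun i => if s i < U' then s i else lmin)) with hM
    have hlmU' : lmin < U' := lt_of_le_of_lt hUlm (lt_of_lt_of_le hUsi0 hi0.2.2)
    have hMU' : M < U' := by
      rw [hM, max_lt_iff]
      refine ⟨hlmU', ?_⟩
      rw [Finset.sup'_lt_iff]
      intro i _
      split_ifs with h
      · exact h
      · exact hlmU'
    have hMs : ∀ i, s i < U' → s i ≤ M := by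
      intro i h
      calc s i = (if s i < U' then s i else lmin) := by rw [if_pos h]
        _ ≤ Finset.univ.sup' hne (fun i => if s i < U' then s i else lmin) := by
            exact Finset.le_sup' (fun i => if s i < U' then s i else lmin)
              (Finset.mem_univ i)
        _ ≤ M := le_max_right _ _
    set y := (M + U') / 2 with hy
    have hMy : M < y := by rw [hy]; linarith
    have hyU' : y < U' := by rw [hy]; linarith
    have hlmy : lmin ≤ y := le_trans (le_max_left _ _) hMy.le
    have hGy : b' < G y := hbelow y hlmy hyU'
    -- jump bound: G y ≤ G U' + vmax / Nr
    have hjump : G y ≤ G U' + vmax / Nr := by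
      have h1 : ∀ i, v i * (if P i ∧ y < s i then 1 else 0)
          ≤ v i * (if P i ∧ U' < s i then 1 else 0) + v i * (if s i = U' then 1 else 0) := by
        intro i
        have hvi1 := (hv i).1
        by_cases hP : P i ∧ y < s i
        · rw [if_pos hP]
          by_cases hU'i : U' < s i
          · have hc1 : P i ∧ U' < s i := ⟨hP.1, hU'i⟩
            rw [if_pos hc1]
            have h0 : (0:ℝ) ≤ v i * (if s i = U' then 1 else 0) := by
              split_ifs <;> nlinarith
            linarith
          · push_neg at hU'i
            have hsiU' : s i = U' := by
              by_contra hne2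
              have h3 : s i < U' := lt_of_le_of_ne hU'i hne2
              have := hMs i h3
              linarith [hP.2]
            rw [if_pos hsiU']
            have h0 : (0:ℝ) ≤ v i * (if P i ∧ U' < s i then 1 else 0) := by
              split_ifs <;> nlinarith
            linarith
        · rw [if_neg hP]
          have h2 : (0:ℝ) ≤ v i * (if P i ∧ U' < s i then 1 else 0) := by
            split_ifs <;> nlinarith
          have h3 : (0:ℝ) ≤ v i * (if s i = U' then 1 else 0) := by
            split_ifs <;> nlinarith
          linarith
      have h2 : ∑ i, v i * (if s i = U' then (1:ℝ) else 0) ≤ vmax := by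
        have he : ∀ i, v i * (if s i = U' then (1:ℝ) else 0) = if s i = U' then v i else 0 := by
          intro i; split_ifs <;> ring
        simp_rw [he]
        rw [← Finset.sum_filter]
        have hcard : (Finset.univ.filter (fun i => s i = U')).card ≤ 1 := by
          rw [Finset.card_le_one]
          intro a ha b2 hb2
          simp only [Finset.mem_filter] at ha hb2
          by_contra hne2
          exact hs a b2 hne2 (ha.2.trans hb2.2.symm)
        calc ∑ i ∈ Finset.univ.filter (fun i => s i = U'), v i
            ≤ ∑ _i ∈ Finset.univ.filter (fun i => s i = U'), vmax :=
              Finset.sum_le_sum (fun i _ => (hv i).2)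
          _ = ((Finset.univ.filter (fun i => s i = U')).card : ℝ) * vmax := by
              rw [Finset.sum_const, nsmul_eq_mul]
          _ ≤ 1 * vmax := by
              apply mul_le_mul_of_nonneg_right _ hvmax.le
              exact_mod_cast hcard
          _ = vmax := one_mul _
      have hsum := Finset.sum_le_sum (fun i (_ : i ∈ (Finset.univ : Finset ι)) => h1 i)
      rw [Finset.sum_add_distrib] at hsum
      rw [hG y, hG U']
      have hNr' : (0:ℝ) ≤ 1 / Nr := by positivity
      calc (1 / Nr) * ∑ i, v i * (if P i ∧ y < s i then 1 else 0)
          ≤ (1 / Nr) * ((∑ i, v i * (if P i ∧ U' < s i then 1 else 0)) + vmax) := by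
            apply mul_le_mul_of_nonneg_left _ hNr'
            linarith
        _ = (1 / Nr) * (∑ i, v i * (if P i ∧ U' < s i then 1 else 0)) + vmax / Nr := by
            ring
    -- split bound at x0
    have hsplit : (F.card : ℝ) * vmin / Nr + G U' ≤ G x0 := by
      have h1 : ∀ i, v i * (if i ∈ F then (1:ℝ) else 0) + v i * (if P i ∧ U' < s i then 1 else 0)
          ≤ v i * (if P i ∧ x0 < s i then 1 else 0) := by
        intro i
        have hvi1 := (hv i).1
        by_cases hiF : i ∈ F
        · have hi := (hmemF i).1 hiF
          have hx0si : x0 < s i := lt_of_lt_of_le hx0s (hi0min i hiF)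
          have hc1 : P i ∧ x0 < s i := ⟨hi.1, hx0si⟩
          have hc2 : ¬(P i ∧ U' < s i) := fun h => absurd hi.2.2 (not_le.2 h.2)
          rw [if_pos hiF, if_neg hc2, if_pos hc1]
          linarith
        · rw [if_neg hiF]
          by_cases h2 : P i ∧ U' < s i
          · have hc1 : P i ∧ x0 < s i := ⟨h2.1, lt_trans hx0U' h2.2⟩
            rw [if_pos h2, if_pos hc1]
            linarith
          · rw [if_neg h2]
            have h3 : (0:ℝ) ≤ v i * (if P i ∧ x0 < s i then 1 else 0) := by
              split_ifs <;> nlinarith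
            linarith
      have h2 : (F.card : ℝ) * vmin ≤ ∑ i, v i * (if i ∈ F then (1:ℝ) else 0) := by
        have he : ∀ i, v i * (if i ∈ F then (1:ℝ) else 0) = if i ∈ F then v i else 0 := by
          intro i; split_ifs <;> ring
        simp_rw [he]
        rw [← Finset.sum_filter, Finset.filter_mem_eq_inter, Finset.univ_inter]
        calc (F.card : ℝ) * vmin = ∑ _i ∈ F, vmin := by rw [Finset.sum_const, nsmul_eq_mul]
          _ ≤ ∑ i ∈ F, v i := Finset.sum_le_sum (fun i _ => (hv i).1)
      have hsum := Finset.sum_le_sum (fun i (_ : i ∈ (Finset.univ : Finset ι)) => h1 i)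
      rw [Finset.sum_add_distrib] at hsum
      rw [hG x0, hG U']
      have hNr' : (0:ℝ) ≤ 1 / Nr := by positivity
      calc (F.card : ℝ) * vmin / Nr
            + (1 / Nr) * ∑ i, v i * (if P i ∧ U' < s i then 1 else 0)
          = (1 / Nr) * ((F.card : ℝ) * vmin
            + ∑ i, v i * (if P i ∧ U' < s i then 1 else 0)) := by ring
        _ ≤ (1 / Nr) * ∑ i, v i * (if P i ∧ x0 < s i then 1 else 0) := by
            apply mul_le_mul_of_nonneg_left _ hNr'
            linarith
    -- conclude
    have hcardeq : ({i : ι | P i ∧ s i ∈ Ioc U U'}.ncard : ℝ) = (F.card : ℝ) := by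
      congr 1
      rw [Set.ncard_eq_toFinset_card']
      congr 1
      ext i
      rw [Set.mem_toFinset, hmemF]
      rfl
    rw [hcardeq]
    have hfinal : (F.card : ℝ) * (vmin / Nr) < b - b' + vmax / Nr := by
      have c1 : (F.card : ℝ) * vmin / Nr + G U' ≤ b := le_trans hsplit hGx0
      have c2 : b' - vmax / Nr < G U' := by linarith
      have c3 : (F.card : ℝ) * vmin / Nr < b - b' + vmax / Nr := by linarith
      calc (F.card : ℝ) * (vmin / Nr) = (F.card : ℝ) * vmin / Nr := by ring
        _ < b - b' + vmax / Nr := c3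
    have hpos : (0:ℝ) < vmin / Nr := by positivity
    exact le_of_lt ((lt_div_iff₀ hpos).2 hfinal)

/-- Lemma: counting scores between two symmetric generalized-inverse levels.
Fix `ℓ ∈ [m]` and `β ≥ β' ≥ 0` such that a.s. `L_ℓ^{(i)}(λ^min) > β` and
`L_ℓ^{(i)}(λ^max) ≤ β'` for all `i`.  Then for any `λ_{1:(ℓ−1)} ∈ Λ_1×…×Λ_{ℓ−1}`, a.s. the number
of indices `i` with `S_t^{(i)} ≤ λ_t` for all `t < ℓ` and
`S_ℓ^{(i)} ∈ (U_ℓ^sym(λ; β), U_ℓ^sym(λ; β')]` is at most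
`(β − β' + Vmax_ℓ/(n+1)) / (Vmin_ℓ/(n+1))`. -/
theorem count_scores_between_levels
    {Ω : Type*} [MeasurableSpace Ω] (μ : Measure Ω) [IsProbabilityMeasure μ]
    (m n : ℕ) (hm : 1 ≤ m) (hn : 1 ≤ n)
    (S V : Fin (n + 1) → Fin m → Ω → ℝ)
    (hSmeas : ∀ i j, Measurable (S i j)) (hVmeas : ∀ i j, Measurable (V i j))
    (lamMin lamMax : Fin m → ℝ) (hΛ : ∀ j, lamMin j ≤ lamMax j)
    (β : Fin m → ℝ) (hβ : ∀ j, 0 ≤ β j)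
    (Vmin Vmax : Fin m → ℝ) (hVle : ∀ j, Vmin j ≤ Vmax j)
    (hVbd : ∀ i j, ∀ᵐ ω ∂μ, V i j ω ∈ Icc (Vmin j) (Vmax j))
    (hexch : ∀ π : Equiv.Perm (Fin (n + 1)),
      Measure.map (fun ω => fun i : Fin (n + 1) =>
          ((fun j => S (π i) j ω), (fun j => V (π i) j ω))) μ
        = Measure.map (fun ω => fun i : Fin (n + 1) =>
          ((fun j => S i j ω), (fun j => V i j ω))) μ)
    (hfeas : ∀ (j : Fin m) (i : Fin (n + 1)), ∀ᵐ ω ∂μ, lossFn S V j i lamMax ω ≤ β j)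
    (hdist : ∀ j : Fin m, ∀ᵐ ω ∂μ,
      ∀ i i' : Fin (n + 1), i ≠ i' → S i j ω ≠ S i' j ω)
    (hVpos : ∀ j, 0 < Vmin j)
    (l : Fin m) (b b' : ℝ) (hb' : 0 ≤ b') (hbb : b' ≤ b)
    (hlow : ∀ i : Fin (n + 1), ∀ᵐ ω ∂μ, b < lossFn S V l i lamMin ω)
    (hup : ∀ i : Fin (n + 1), ∀ᵐ ω ∂μ, lossFn S V l i lamMax ω ≤ b')
    (lam : Fin m → ℝ) (hlam : ∀ t : Fin m, t < l → lam t ∈ Icc (lamMin t) (lamMax t)) :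
    ∀ᵐ ω ∂μ,
      (({i : Fin (n + 1) | (∀ t, t < l → S i t ω ≤ lam t) ∧
          S i l ω ∈ Ioc (USym S V lamMin lamMax l lam b ω)
            (USym S V lamMin lamMax l lam b' ω)}.ncard : ℝ))
        ≤ (b - b' + Vmax l / ((n : ℝ) + 1)) / (Vmin l / ((n : ℝ) + 1)) := by
  have hVae : ∀ᵐ ω ∂μ, ∀ i : Fin (n + 1), V i l ω ∈ Icc (Vmin l) (Vmax l) :=
    (MeasureTheory.ae_all_iff).2 (fun i => hVbd i l)
  filter_upwards [hVae, hdist l] with ω hVω hdω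
  have hGdef : ∀ (D : ∀ x i, Decidable ((∀ t, t < l → S i t ω ≤ lam t) ∧ x < S i l ω)),
      ∀ x : ℝ, gSym S V l (Function.update lam l x) ω
      = (1 / ((n : ℝ) + 1)) * ∑ i : Fin (n + 1), (V i l ω)
          * (@ite ℝ ((∀ t, t < l → S i t ω ≤ lam t) ∧ x < S i l ω) (D x i) 1 0) := by
    intro _ x
    unfold gSym lossFn
    congr 1
    refine Finset.sum_congr rfl (fun i _ => ?_)
    congr 1
    apply if_congr _ rfl rfl
    have hl : Function.update lam l x l = x := Function.update_self l x lam
    constructor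
    · rintro ⟨ha, hb2⟩
      refine ⟨fun t ht => ?_, by rwa [hl] at hb2⟩
      have := ha t ht
      rwa [Function.update_of_ne (ne_of_lt ht)] at this
    · rintro ⟨ha, hb2⟩
      refine ⟨fun t ht => ?_, by rwa [hl]⟩
      rw [Function.update_of_ne (ne_of_lt ht)]
      exact ha t ht
  have := key_count (ι := Fin (n + 1))
    (fun i => ∀ t, t < l → S i t ω ≤ lam t)
    (fun i => S i l ω) (fun i => V i l ω)
    (Vmin l) (Vmax l) (hVpos l) (hVle l) (fun i => hVω i)
    (fun i i' h => hdω i i' h)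
    ((n : ℝ) + 1) (by positivity)
    (lamMin l) (lamMax l) b b' hbb
    (fun x => gSym S V l (Function.update lam l x) ω)
    (hGdef _)
  exact this

end
end

section
/- (Uniform perturbation bound for the population risk.) Fix j ∈ {1,…,m}, λ_{1:(j−1)} ∈ ℝ^{j−1}, and α_{1:(j−1)} ∈ ℝ^{j−1} with α_ℓ = 0 for every ℓ ∈ {1,…,j−1} ∩ D. Then sup over λ_j ∈ ℝ of |g_j^*(λ_j; λ_1 + α_1, …, λ_{j−1} + α_{j−1}) − g_j^*(λ_j; λ_1, …, λ_{j−1})| is at most Vmax_j · Σ_{ℓ ∈ {1,…,j−1} \ D} K_ℓ·|α_ℓ|. -/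
open MeasureTheory Set

attribute [local instance] Classical.propDecidable

noncomputable section

/-- The population risk `g_j^*(λ_j; λ_{1:(j−1)}) = E[L_j^{(n+1)}(λ_{1:j})]`, the expectation being
taken at the test datapoint `i = n+1`. -/
def gStar {Ω : Type*} [MeasurableSpace Ω] {m n : ℕ} (μ : Measure Ω)
    (S V : Fin (n + 1) → Fin m → Ω → ℝ) (j : Fin m) (lam : Fin m → ℝ) : ℝ :=
  ∫ ω, lossFn S V j (Fin.last n) lam ω ∂μ

/-- `U_j^*(λ_{1:(j−1)}; b) = sup{x ∈ Λ_j : g_j^*(x; λ_{1:(j−1)}) > b}`, the supremum of the empty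
set being `λ_j^min` (implemented by inserting `λ_j^min` into the set, which does not change the
supremum of a nonempty subset of `Λ_j`). -/
def UStar {Ω : Type*} [MeasurableSpace Ω] {m n : ℕ} (μ : Measure Ω)
    (S V : Fin (n + 1) → Fin m → Ω → ℝ) (lamMin lamMax : Fin m → ℝ)
    (j : Fin m) (lam : Fin m → ℝ) (b : ℝ) : ℝ :=
  sSup (insert (lamMin j)
    {x | x ∈ Icc (lamMin j) (lamMax j) ∧ b < gStar μ S V j (Function.update lam j x)})

/-- Lemma: uniform perturbation bound for the population risk.  Fix `j`,
`λ_{1:(j−1)}` and a perturbation `α_{1:(j−1)}` with `α_ℓ = 0` for each discrete index `ℓ < j`.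
Then, uniformly in `λ_j`,
`|g_j^*(λ_j; λ_{1:(j−1)} + α_{1:(j−1)}) − g_j^*(λ_j; λ_{1:(j−1)})|
  ≤ Vmax_j · Σ_{ℓ<j, ℓ∉D} K_ℓ·|α_ℓ|`. -/
theorem population_risk_perturbation
    {Ω : Type*} [MeasurableSpace Ω] (μ : Measure Ω) [IsProbabilityMeasure μ]
    (m n : ℕ) (hm : 1 ≤ m) (hn : 1 ≤ n)
    (S V : Fin (n + 1) → Fin m → Ω → ℝ)
    (hSmeas : ∀ i j, Measurable (S i j)) (hVmeas : ∀ i j, Measurable (V i j))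
    (Vmin Vmax : Fin m → ℝ) (hVmin0 : ∀ j, 0 ≤ Vmin j) (hVle : ∀ j, Vmin j ≤ Vmax j)
    (hVbd : ∀ i j, ∀ᵐ ω ∂μ, V i j ω ∈ Icc (Vmin j) (Vmax j))
    -- D ⊆ [m] is the set of discrete-score indices; the continuous scores have Lipschitz cdfs
    (Dset : Finset (Fin m)) (K : Fin m → ℝ) (hKpos : ∀ ℓ, ℓ ∉ Dset → 0 < K ℓ)
    (hK : ∀ ℓ : Fin m, ℓ ∉ Dset → ∀ s t : ℝ,
      |(μ {ω | S (Fin.last n) ℓ ω ≤ s}).toReal - (μ {ω | S (Fin.last n) ℓ ω ≤ t}).toReal|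
        ≤ K ℓ * |s - t|)
    (j : Fin m) (lam α : Fin m → ℝ)
    (hα : ∀ ℓ : Fin m, ℓ < j → ℓ ∈ Dset → α ℓ = 0) :
    ∀ x : ℝ,
      |gStar μ S V j (Function.update (fun ℓ => lam ℓ + α ℓ) j x)
          - gStar μ S V j (Function.update lam j x)|
        ≤ Vmax j * ∑ ℓ ∈ Finset.univ.filter (fun ℓ : Fin m => ℓ < j ∧ ℓ ∉ Dset),
            K ℓ * |α ℓ| := by
  intro x
  classical
  set T : Fin m → Ω → ℝ := S (Fin.last n) with hT
  set W : Ω → ℝ := V (Fin.last n) j with hW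
  set lam1 : Fin m → ℝ := Function.update (fun ℓ => lam ℓ + α ℓ) j x with hlam1
  set lam2 : Fin m → ℝ := Function.update lam j x with hlam2
  have hWmeas : Measurable W := hVmeas _ _
  have hWbd : ∀ᵐ ω ∂μ, W ω ∈ Icc (Vmin j) (Vmax j) := hVbd _ _
  have hVmax0 : (0:ℝ) ≤ Vmax j := le_trans (hVmin0 j) (hVle j)
  set A : Set Ω := {ω | (∀ l, l < j → T l ω ≤ lam1 l) ∧ lam1 j < T j ω} with hA
  set B : Set Ω := {ω | (∀ l, l < j → T l ω ≤ lam2 l) ∧ lam2 j < T j ω} with hB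
  have hmeasEv : ∀ (c : Fin m → ℝ),
      MeasurableSet {ω | (∀ l, l < j → T l ω ≤ c l) ∧ c j < T j ω} := by
    intro c
    have heq : {ω | (∀ l, l < j → T l ω ≤ c l) ∧ c j < T j ω}
        = (⋂ l : Fin m, ⋂ _ : l < j, {ω | T l ω ≤ c l}) ∩ {ω | c j < T j ω} := by
      ext ω; simp [Set.mem_iInter, Set.mem_setOf_eq]
    rw [heq]
    exact (MeasurableSet.iInter fun l => MeasurableSet.iInter fun _ =>
      measurableSet_le (hSmeas _ _) measurable_const).inter
      (measurableSet_lt measurable_const (hSmeas _ _))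
  have hAmeas : MeasurableSet A := hmeasEv lam1
  have hBmeas : MeasurableSet B := hmeasEv lam2
  have hg : ∀ (c : Fin m → ℝ),
      gStar μ S V j c
        = ∫ ω, ({ω | (∀ l, l < j → T l ω ≤ c l) ∧ c j < T j ω}.indicator W) ω ∂μ := by
    intro c
    unfold gStar lossFn
    congr 1
    funext ω
    by_cases h : (∀ l, l < j → T l ω ≤ c l) ∧ c j < T j ω
    · simp [Set.indicator, h, hT, hW]
    · simp [Set.indicator, h, hT, hW]
  have hg1 : gStar μ S V j lam1 = ∫ ω, A.indicator W ω ∂μ := hg lam1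
  have hg2 : gStar μ S V j lam2 = ∫ ω, B.indicator W ω ∂μ := hg lam2
  have hWint : Integrable W μ := by
    refine Integrable.mono' (integrable_const (Vmax j)) hWmeas.aestronglyMeasurable ?_
    filter_upwards [hWbd] with ω hω
    rw [Real.norm_eq_abs, abs_of_nonneg (le_trans (hVmin0 j) hω.1)]
    exact hω.2
  have hintA : Integrable (A.indicator W) μ := hWint.indicator hAmeas
  have hintB : Integrable (B.indicator W) μ := hWint.indicator hBmeas
  set C : Set Ω := (A \ B) ∪ (B \ A) with hC
  have hCmeas : MeasurableSet C := (hAmeas.diff hBmeas).union (hBmeas.diff hAmeas)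
  have hptwise : ∀ᵐ ω ∂μ, ‖A.indicator W ω - B.indicator W ω‖ ≤
      C.indicator (fun _ => Vmax j) ω := by
    filter_upwards [hWbd] with ω hω
    have hW0 : 0 ≤ W ω := le_trans (hVmin0 j) hω.1
    by_cases hA' : ω ∈ A <;> by_cases hB' : ω ∈ B <;>
      simp [Set.indicator, hA', hB', hC, Real.norm_eq_abs,
        abs_of_nonneg hW0, abs_of_nonpos (neg_nonpos.mpr hW0), hω.2, hVmax0]
  have hstep1 : |gStar μ S V j lam1 - gStar μ S V j lam2| ≤ Vmax j * (μ C).toReal := by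
    rw [hg1, hg2, ← integral_sub hintA hintB]
    calc |∫ ω, (A.indicator W ω - B.indicator W ω) ∂μ|
        ≤ ∫ ω, ‖A.indicator W ω - B.indicator W ω‖ ∂μ := by
          rw [← Real.norm_eq_abs]; exact norm_integral_le_integral_norm _
      _ ≤ ∫ ω, C.indicator (fun _ => Vmax j) ω ∂μ := by
          exact integral_mono_ae ((hintA.sub hintB).norm)
            ((integrable_const (Vmax j)).indicator hCmeas) hptwise
      _ = (μ C).toReal * Vmax j := by
          rw [integral_indicator_const _ hCmeas]; simp [mul_comm, measureReal_def]
      _ = Vmax j * (μ C).toReal := by ring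
  set F : Finset (Fin m) := Finset.univ.filter (fun ℓ : Fin m => ℓ < j ∧ ℓ ∉ Dset) with hF
  set E : Fin m → Set Ω := fun l =>
    {ω | T l ω ≤ max (lam l) (lam l + α l)} \ {ω | T l ω ≤ min (lam l) (lam l + α l)} with hE
  have hj1 : lam1 j = x := Function.update_self _ _ _
  have hj2 : lam2 j = x := Function.update_self _ _ _
  have hl1 : ∀ l : Fin m, l ≠ j → lam1 l = lam l + α l := fun l hl =>
    Function.update_of_ne hl _ _
  have hl2 : ∀ l : Fin m, l ≠ j → lam2 l = lam l := fun l hl =>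
    Function.update_of_ne hl _ _
  have hcover : C ⊆ ⋃ l ∈ F, E l := by
    intro ω hω
    have key : ∃ l, l < j ∧ l ∉ Dset ∧ ω ∈ E l := by
      rcases hω with hω | hω
      · obtain ⟨⟨h1, h2⟩, h3⟩ := hω
        have h4 : ∃ l, l < j ∧ lam2 l < T l ω := by
          by_contra hcon
          push_neg at hcon
          exact h3 ⟨fun l hl => hcon l hl, by rw [hj2, ← hj1]; exact h2⟩
        obtain ⟨l, hlj, hlt⟩ := h4
        have hne : l ≠ j := ne_of_lt hlj
        rw [hl2 l hne] at hlt
        have hle : T l ω ≤ lam l + α l := by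
          have := h1 l hlj; rwa [hl1 l hne] at this
        have hD : l ∉ Dset := by
          intro hmem
          have := hα l hlj hmem
          rw [this, add_zero] at hle
          exact absurd hle (not_le_of_gt hlt)
        refine ⟨l, hlj, hD, ?_, ?_⟩
        · exact le_trans hle (le_max_right _ _)
        · simp only [Set.mem_setOf_eq, not_le]
          exact lt_of_le_of_lt (min_le_left _ _) hlt
      · obtain ⟨⟨h1, h2⟩, h3⟩ := hω
        have h4 : ∃ l, l < j ∧ lam1 l < T l ω := by
          by_contra hcon
          push_neg at hcon
          exact h3 ⟨fun l hl => hcon l hl, by rw [hj1, ← hj2]; exact h2⟩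
        obtain ⟨l, hlj, hlt⟩ := h4
        have hne : l ≠ j := ne_of_lt hlj
        rw [hl1 l hne] at hlt
        have hle : T l ω ≤ lam l := by
          have := h1 l hlj; rwa [hl2 l hne] at this
        have hD : l ∉ Dset := by
          intro hmem
          have := hα l hlj hmem
          rw [this, add_zero] at hlt
          exact absurd hle (not_le_of_gt hlt)
        refine ⟨l, hlj, hD, ?_, ?_⟩
        · exact le_trans hle (le_max_left _ _)
        · simp only [Set.mem_setOf_eq, not_le]
          exact lt_of_le_of_lt (min_le_right _ _) hlt
    obtain ⟨l, ha, hb, hc⟩ := key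
    exact Set.mem_biUnion (Finset.mem_filter.mpr ⟨Finset.mem_univ l, ⟨ha, hb⟩⟩) hc
  have hmuE : ∀ l ∈ F, (μ (E l)).toReal ≤ K l * |α l| := by
    intro l hl
    have hlprop : l < j ∧ l ∉ Dset := by simpa [hF] using hl
    have hsub : {ω | T l ω ≤ min (lam l) (lam l + α l)}
        ⊆ {ω | T l ω ≤ max (lam l) (lam l + α l)} := by
      intro ω h
      simp only [Set.mem_setOf_eq] at h ⊢
      exact le_trans h min_le_max
    have hmeaslo : MeasurableSet {ω | T l ω ≤ min (lam l) (lam l + α l)} :=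
      measurableSet_le (hSmeas _ _) measurable_const
    have hdiff : μ (E l)
        = μ {ω | T l ω ≤ max (lam l) (lam l + α l)}
          - μ {ω | T l ω ≤ min (lam l) (lam l + α l)} :=
      measure_diff hsub hmeaslo.nullMeasurableSet (measure_ne_top μ _)
    rw [hdiff, ENNReal.toReal_sub_of_le (measure_mono hsub) (measure_ne_top μ _)]
    rcases le_total (lam l) (lam l + α l) with hcase | hcase
    · rw [max_eq_right hcase, min_eq_left hcase]
      have := hK l hlprop.2 (lam l + α l) (lam l)
      calc (μ {ω | T l ω ≤ lam l + α l}).toReal - (μ {ω | T l ω ≤ lam l}).toReal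
          ≤ |(μ {ω | T l ω ≤ lam l + α l}).toReal - (μ {ω | T l ω ≤ lam l}).toReal| :=
            le_abs_self _
        _ ≤ K l * |lam l + α l - lam l| := this
        _ = K l * |α l| := by ring_nf
    · rw [max_eq_left hcase, min_eq_right hcase]
      have := hK l hlprop.2 (lam l) (lam l + α l)
      calc (μ {ω | T l ω ≤ lam l}).toReal - (μ {ω | T l ω ≤ lam l + α l}).toReal
          ≤ |(μ {ω | T l ω ≤ lam l}).toReal - (μ {ω | T l ω ≤ lam l + α l}).toReal| :=
            le_abs_self _
        _ ≤ K l * |lam l - (lam l + α l)| := this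
        _ = K l * |α l| := by rw [show lam l - (lam l + α l) = -α l by ring, abs_neg]
  have hμC : (μ C).toReal ≤ ∑ l ∈ F, (μ (E l)).toReal := by
    have h1 : μ C ≤ ∑ l ∈ F, μ (E l) :=
      le_trans (measure_mono hcover) (measure_biUnion_finset_le F E)
    have h2 : (∑ l ∈ F, μ (E l)) ≠ ⊤ :=
      ENNReal.sum_ne_top.mpr fun l _ => measure_ne_top μ _
    calc (μ C).toReal ≤ (∑ l ∈ F, μ (E l)).toReal := ENNReal.toReal_mono h2 h1
      _ = ∑ l ∈ F, (μ (E l)).toReal := ENNReal.toReal_sum fun l _ => measure_ne_top μ _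
  calc |gStar μ S V j lam1 - gStar μ S V j lam2|
      ≤ Vmax j * (μ C).toReal := hstep1
    _ ≤ Vmax j * ∑ l ∈ F, (μ (E l)).toReal := mul_le_mul_of_nonneg_left hμC hVmax0
    _ ≤ Vmax j * ∑ l ∈ F, K l * |α l| :=
        mul_le_mul_of_nonneg_left (Finset.sum_le_sum hmuE) hVmax0


end
end

section
/- (Reverse Hölder lower bound for the population risk.) Fix j ∈ {1,…,m} with S_j continuously distributed (j a continuous index). Then for every λ_{1:(j−1)} ∈ ∏_{ℓ=1}^{j−1} (0, B_ℓ) and all λ_j ≤ λ_j' with λ_j, λ_j' ∈ (0, B_j): g_j^*(λ_j; λ_{1:(j−1)}) − g_j^*(λ_j'; λ_{1:(j−1)}) ≥ Vmin_j · K̃_j · (λ_j' − λ_j)^ν. In particular the constant ξ_j := Vmin_j·K̃_j is strictly positive. -/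
open MeasureTheory Set

attribute [local instance] Classical.propDecidable

noncomputable section

/-- Lemma: reverse Hölder lower bound for the population risk.  Fix a
continuous index `j`.  Under bounded positive costs, compactly supported scores and a reverse
`ν`-Hölder joint cdf in coordinate `j`, for every `λ_{1:(j−1)} ∈ ∏_{ℓ<j}(0,B_ℓ)` and all
`λ_j ≤ λ_j'` in `(0,B_j)`:
`g_j^*(λ_j; λ_{1:(j−1)}) − g_j^*(λ_j'; λ_{1:(j−1)}) ≥ Vmin_j·K̃_j·(λ_j' − λ_j)^ν`, and the
constant `ξ_j = Vmin_j·K̃_j` is strictly positive. -/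
theorem population_risk_reverse_holder
    {Ω : Type*} [MeasurableSpace Ω] (μ : Measure Ω) [IsProbabilityMeasure μ]
    (m n : ℕ) (hm : 1 ≤ m) (hn : 1 ≤ n)
    (S V : Fin (n + 1) → Fin m → Ω → ℝ)
    (hSmeas : ∀ i j, Measurable (S i j)) (hVmeas : ∀ i j, Measurable (V i j))
    (j : Fin m)
    -- bounded positive costs
    (Vmin Vmax : Fin m → ℝ) (hVpos : 0 < Vmin j) (hVle : Vmin j ≤ Vmax j)
    (hVbd : ∀ᵐ ω ∂μ, V (Fin.last n) j ω ∈ Icc (Vmin j) (Vmax j))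
    -- compactly supported scores
    (B : Fin m → ℝ) (hB : ∀ ℓ, 0 < B ℓ)
    (hsupp : ∀ᵐ ω ∂μ, ∀ ℓ : Fin m, S (Fin.last n) ℓ ω ∈ Ioo 0 (B ℓ))
    -- reverse ν-Hölder joint cdf in coordinate j
    (ν : ℝ) (hν : 1 ≤ ν) (Ktil : Fin m → ℝ) (hKtil : 0 < Ktil j)
    (hrev : ∀ s : Fin m → ℝ, (∀ ℓ, s ℓ ∈ Ioo 0 (B ℓ)) → ∀ s' : ℝ, s' ∈ Ioo 0 (B j) →
      s j ≤ s' →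
      Ktil j * (s' - s j) ^ ν
        ≤ (μ {ω | ∀ ℓ : Fin m, S (Fin.last n) ℓ ω ≤ Function.update s j s' ℓ}).toReal
            - (μ {ω | ∀ ℓ : Fin m, S (Fin.last n) ℓ ω ≤ s ℓ}).toReal) :
    0 < Vmin j * Ktil j ∧
    ∀ lam : Fin m → ℝ, (∀ ℓ : Fin m, ℓ < j → lam ℓ ∈ Ioo 0 (B ℓ)) →
      ∀ x x' : ℝ, x ∈ Ioo 0 (B j) → x' ∈ Ioo 0 (B j) → x ≤ x' →
        Vmin j * Ktil j * (x' - x) ^ ν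
          ≤ gStar μ S V j (Function.update lam j x)
              - gStar μ S V j (Function.update lam j x') := by
  refine ⟨mul_pos hVpos hKtil, ?_⟩
  intro lam hlam x x' hx hx' hxx'
  set Sn : Fin m → Ω → ℝ := S (Fin.last n) with hSndef
  set Vn : Ω → ℝ := V (Fin.last n) j with hVndef
  set C : ℝ → Set Ω := fun y => {ω | (∀ l, l < j → Sn l ω ≤ lam l) ∧ y < Sn j ω} with hCdef
  have hC : ∀ y, MeasurableSet (C y) := by
    intro y
    have h1 : MeasurableSet {ω | ∀ l, l < j → Sn l ω ≤ lam l} := by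
      have he : {ω | ∀ l, l < j → Sn l ω ≤ lam l}
          = ⋂ l, ⋂ _h : l < j, {ω | Sn l ω ≤ lam l} := by
        ext ω; simp [Set.mem_iInter]
      rw [he]
      exact MeasurableSet.iInter fun l => MeasurableSet.iInter fun _ =>
        measurableSet_le (hSmeas _ _) measurable_const
    exact h1.inter (measurableSet_lt measurable_const (hSmeas _ _))
  have hloss : ∀ y ω, lossFn S V j (Fin.last n) (Function.update lam j y) ω
      = (C y).indicator Vn ω := by
    intro y ω
    have hcond : ((∀ l, l < j → Sn l ω ≤ Function.update lam j y l) ∧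
        Function.update lam j y j < Sn j ω) ↔ ω ∈ C y := by
      constructor
      · rintro ⟨h1, h2⟩
        refine ⟨fun l hl => ?_, ?_⟩
        · have := h1 l hl
          rwa [Function.update_of_ne (ne_of_lt hl)] at this
        · rwa [Function.update_self] at h2
      · rintro ⟨h1, h2⟩
        refine ⟨fun l hl => ?_, ?_⟩
        · rw [Function.update_of_ne (ne_of_lt hl)]; exact h1 l hl
        · rwa [Function.update_self]
    simp only [lossFn, Set.indicator_apply]
    by_cases h : ω ∈ C y
    · rw [if_pos (hcond.mpr h), if_pos h]; ring
    · rw [if_neg (fun hh => h (hcond.mp hh)), if_neg h]; ring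
  have hVmeasn : Measurable Vn := hVmeas _ _
  have hVbd' : ∀ᵐ ω ∂μ, Vmin j ≤ Vn ω ∧ Vn ω ≤ Vmax j := hVbd.mono fun ω h => ⟨h.1, h.2⟩
  have hintInd : ∀ s : Set Ω, MeasurableSet s → Integrable (s.indicator Vn) μ := by
    intro s hs
    refine (integrable_const (Vmax j)).mono'
      (hVmeasn.indicator hs).aestronglyMeasurable ?_
    filter_upwards [hVbd'] with ω hω
    rw [Real.norm_eq_abs, abs_le]
    by_cases h : ω ∈ s
    · rw [Set.indicator_of_mem h]
      constructor <;> linarith [hω.1, hω.2, hVpos, hVle]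
    · rw [Set.indicator_of_notMem h]
      constructor <;> linarith [hVpos, hVle]
  have hsub : C x' ⊆ C x := fun ω h => ⟨h.1, lt_of_le_of_lt hxx' h.2⟩
  set E : Set Ω := (C x) \ (C x') with hEdef
  have hEmeas : MeasurableSet E := (hC x).diff (hC x')
  have hdiff : ∀ ω, (C x).indicator Vn ω - (C x').indicator Vn ω = E.indicator Vn ω := by
    intro ω
    by_cases h' : ω ∈ C x'
    · have hx0 : ω ∈ C x := hsub h'
      have hE : ω ∉ E := fun hE => hE.2 h'
      rw [Set.indicator_of_mem h', Set.indicator_of_mem hx0, Set.indicator_of_notMem hE]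
      ring
    · by_cases h : ω ∈ C x
      · have hE : ω ∈ E := ⟨h, h'⟩
        rw [Set.indicator_of_notMem h', Set.indicator_of_mem h, Set.indicator_of_mem hE]
        ring
      · have hE : ω ∉ E := fun hE => h hE.1
        rw [Set.indicator_of_notMem h', Set.indicator_of_notMem h,
          Set.indicator_of_notMem hE]
        ring
  have hg : gStar μ S V j (Function.update lam j x) - gStar μ S V j (Function.update lam j x')
      = ∫ ω, E.indicator Vn ω ∂μ := by
    rw [gStar, gStar,
      integral_congr_ae (Filter.Eventually.of_forall (hloss x)),
      integral_congr_ae (Filter.Eventually.of_forall (hloss x')),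
      ← integral_sub (hintInd _ (hC x)) (hintInd _ (hC x'))]
    exact integral_congr_ae (Filter.Eventually.of_forall hdiff)
  have hlow : Vmin j * (μ E).toReal ≤ ∫ ω, E.indicator Vn ω ∂μ := by
    have h1 : ∫ ω, E.indicator (fun _ => Vmin j) ω ∂μ = (μ E).toReal * Vmin j := by
      rw [integral_indicator_const _ hEmeas]; simp [smul_eq_mul, Measure.real]
    have h2 : ∫ ω, E.indicator (fun _ => Vmin j) ω ∂μ ≤ ∫ ω, E.indicator Vn ω ∂μ := by
      refine integral_mono_ae ((integrable_const (Vmin j)).indicator hEmeas)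
        (hintInd _ hEmeas) ?_
      filter_upwards [hVbd'] with ω hω
      by_cases h : ω ∈ E
      · rw [Set.indicator_of_mem h, Set.indicator_of_mem h]; exact hω.1
      · rw [Set.indicator_of_notMem h, Set.indicator_of_notMem h]
    calc Vmin j * (μ E).toReal = (μ E).toReal * Vmin j := by ring
      _ = ∫ ω, E.indicator (fun _ => Vmin j) ω ∂μ := h1.symm
      _ ≤ _ := h2
  -- measure lower bound via hrev
  set s0 : Fin m → ℝ := fun l => if l < j then lam l else if l = j then x else B l / 2
    with hs0def
  have hs0j : s0 j = x := by simp [hs0def]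
  have hs0lt : ∀ l, l < j → s0 l = lam l := by intro l hl; simp [hs0def, hl]
  have hs0 : ∀ ℓ, s0 ℓ ∈ Ioo 0 (B ℓ) := by
    intro ℓ
    rcases lt_trichotomy ℓ j with h | h | h
    · rw [hs0lt ℓ h]; exact hlam ℓ h
    · subst h; rw [hs0j]; exact hx
    · have h1 : ¬ ℓ < j := not_lt_of_gt h
      have h2 : ℓ ≠ j := ne_of_gt h
      simp only [hs0def, if_neg h1, if_neg h2]
      constructor
      · linarith [hB ℓ]
      · linarith [hB ℓ]
  have hrev' := hrev s0 hs0 x' hx' (by rw [hs0j]; exact hxx')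
  rw [hs0j] at hrev'
  have hμ : Ktil j * (x' - x) ^ ν ≤ (μ E).toReal := by
    set A : Set Ω := {ω | ∀ ℓ : Fin m, Sn ℓ ω ≤ s0 ℓ} with hAdef
    set A' : Set Ω := {ω | ∀ ℓ : Fin m, Sn ℓ ω ≤ Function.update s0 j x' ℓ} with hA'def
    have hA'sub : A' ⊆ A ∪ E := by
      intro ω hω
      by_cases hA : ω ∈ A
      · exact Or.inl hA
      · refine Or.inr ⟨⟨fun l hl => ?_, ?_⟩, ?_⟩
        · have := hω l
          rwa [Function.update_of_ne (ne_of_lt hl), hs0lt l hl] at this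
        · -- Sn j ω > x since ω ∉ A and all other coords are satisfied
          by_contra hc
          push_neg at hc
          apply hA
          intro ℓ
          by_cases hℓ : ℓ = j
          · subst hℓ; rwa [hs0j]
          · have := hω ℓ
            rwa [Function.update_of_ne hℓ] at this
        · intro hCx'
          have := hω j
          rw [Function.update_self] at this
          exact absurd hCx'.2 (not_lt.mpr this)
    have hA'le : μ A' ≤ μ A + μ E :=
      le_trans (measure_mono hA'sub) (measure_union_le _ _)
    have h1 : (μ A').toReal ≤ (μ A).toReal + (μ E).toReal := by
      calc (μ A').toReal ≤ (μ A + μ E).toReal :=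
            ENNReal.toReal_mono (by finiteness) hA'le
        _ = (μ A).toReal + (μ E).toReal :=
            ENNReal.toReal_add (measure_ne_top μ A) (measure_ne_top μ E)
    linarith [hrev']
  calc Vmin j * Ktil j * (x' - x) ^ ν = Vmin j * (Ktil j * (x' - x) ^ ν) := by ring
    _ ≤ Vmin j * (μ E).toReal := mul_le_mul_of_nonneg_left hμ hVpos.le
    _ ≤ ∫ ω, E.indicator Vn ω ∂μ := hlow
    _ = _ := hg.symm

end
end
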